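/- arXiv:1608.08572 — 6 statements merged into one kernel-verified Lean document; each statement's English description precedes it below -/
import Mathlib

section
/- Let ‖·‖ : G → [0,∞) be a continuous homogeneous norm on a Carnot group G (continuous, vanishing only at the identity, and ‖δ_λ g‖ = λ‖g‖), and set d(g,h) = ‖g⁻¹h‖. Then there exists a continuous increasing function ζ : [0, 1/2) → ℝ with ζ(0) = 0 such that for all g, h ∈ G with d(g,h) < ε·d(e,g) (0 ≤ ε < 1/2), one has d(e,h) ≤ (1 + ζ(ε)) d(e,g). -/
open Set Filter Topology

/-- for a continuous homogeneous norm `Nm` on a Carnot group `G`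
(with dilations `δ` acting as automorphisms and compact unit ball), setting
`d(g,h) = Nm (g⁻¹ h)`, there is a continuous increasing function
`ζ : [0,1/2) → ℝ` with `ζ 0 = 0` such that `d(g,h) < ε·d(1,g)` implies
`d(1,h) ≤ (1 + ζ ε)·d(1,g)`. -/
theorem stmt10 {G : Type*} [Group G] [TopologicalSpace G] [IsTopologicalGroup G]
    (Nm : G → ℝ) (δ : ℝ → G → G)
    (hNc : Continuous Nm) (hNnn : ∀ g, 0 ≤ Nm g)
    (hN0 : ∀ g, Nm g = 0 ↔ g = 1)
    (hNδ : ∀ (l : ℝ) (g : G), 0 < l → Nm (δ l g) = l * Nm g)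
    (hδmul : ∀ (l : ℝ) (g h : G), 0 < l → δ l (g * h) = δ l g * δ l h)
    (hδc : ∀ l : ℝ, 0 < l → Continuous (δ l))
    (hball : IsCompact {g : G | Nm g ≤ 1}) :
    ∃ ζ : ℝ → ℝ, ContinuousOn ζ (Set.Ico 0 (1/2)) ∧ MonotoneOn ζ (Set.Ico 0 (1/2)) ∧
      ζ 0 = 0 ∧
      ∀ ε ∈ Set.Ico (0 : ℝ) (1/2), ∀ g h : G,
        Nm (g⁻¹ * h) < ε * Nm g → Nm h ≤ (1 + ζ ε) * Nm g := by
  classical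
  have hNm1 : Nm (1 : G) = 0 := (hN0 1).mpr rfl
  set S : ℝ → Set ℝ :=
    fun ε => {z : ℝ | ∃ x y : G, Nm x ≤ 1 ∧ Nm y ≤ ε ∧ z = Nm (x * y)} with hSdef
  set M : ℝ → ℝ := fun ε => sSup (S ε) with hMdef
  have hS0 : ∀ ε : ℝ, 0 ≤ ε → (0:ℝ) ∈ S ε := by
    intro ε hε
    exact ⟨1, 1, by simp [hNm1], le_of_eq_of_le hNm1 hε, by simp [hNm1]⟩
  have hSne : ∀ ε : ℝ, 0 ≤ ε → (S ε).Nonempty := fun ε hε => ⟨0, hS0 ε hε⟩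
  have hbdd : ∀ ε : ℝ, ε ≤ 1 → BddAbove (S ε) := by
    intro ε hε
    have hcomp : IsCompact ((fun p : G × G => Nm (p.1 * p.2)) ''
        ({g : G | Nm g ≤ 1} ×ˢ {g : G | Nm g ≤ 1})) :=
      (hball.prod hball).image (hNc.comp (continuous_fst.mul continuous_snd))
    refine BddAbove.mono ?_ hcomp.bddAbove
    rintro z ⟨x, y, hx, hy, rfl⟩
    exact ⟨(x, y), ⟨hx, hy.trans hε⟩, rfl⟩
  have hMnn : ∀ ε : ℝ, 0 ≤ ε → ε ≤ 1 → 0 ≤ M ε :=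
    fun ε h1 h2 => le_csSup (hbdd ε h2) (hS0 ε h1)
  have hMmono : ∀ a b : ℝ, 0 ≤ a → a ≤ b → b ≤ 1 → M a ≤ M b := by
    intro a b ha hab hb1
    refine csSup_le_csSup (hbdd b hb1) (hSne a ha) ?_
    rintro z ⟨x, y, hx, hy, rfl⟩
    exact ⟨x, y, hx, hy.trans hab, rfl⟩
  have hscale : ∀ a b : ℝ, 0 < a → a ≤ b → b ≤ 1 → M b ≤ (b/a) * M a := by
    intro a b ha hab hb1
    refine csSup_le (hSne b (by linarith)) ?_
    rintro z ⟨x, y, hx, hy, rfl⟩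
    have hb : 0 < b := lt_of_lt_of_le ha hab
    have hl : 0 < a / b := by positivity
    have hmem : a / b * Nm (x * y) ∈ S a := by
      refine ⟨δ (a/b) x, δ (a/b) y, ?_, ?_, ?_⟩
      · rw [hNδ _ _ hl]
        have hl1 : a / b ≤ 1 := by rw [div_le_one hb]; exact hab
        nlinarith [hNnn x]
      · rw [hNδ _ _ hl]
        have h1 : a / b * Nm y ≤ a / b * b := by nlinarith
        have h2 : a / b * b = a := by field_simp
        linarith
      · rw [← hδmul _ _ _ hl, hNδ _ _ hl]
    have hle : a / b * Nm (x * y) ≤ M a := le_csSup (hbdd a (hab.trans hb1)) hmem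
    have h3 := mul_le_mul_of_nonneg_left hle (le_of_lt (show (0:ℝ) < b/a by positivity))
    have h4 : b / a * (a / b * Nm (x * y)) = Nm (x * y) := by field_simp
    linarith
  have hM0 : M 0 ≤ 1 := by
    refine csSup_le (hSne 0 le_rfl) ?_
    rintro z ⟨x, y, hx, hy, rfl⟩
    have hy1 : y = 1 := (hN0 y).mp (le_antisymm hy (hNnn y))
    rw [hy1, mul_one]; exact hx
  -- compactness: M is small near 0
  have lem0 : ∀ c : ℝ, 0 < c → ∃ ε₀ : ℝ, 0 < ε₀ ∧ ε₀ < 1/2 ∧ M ε₀ ≤ 1 + c := by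
    intro c hc
    by_contra hcon
    push_neg at hcon
    set Z : ℕ → Set (G × G) := fun n =>
      {p : G × G | Nm p.1 ≤ 1 ∧ Nm p.2 ≤ 1/((n:ℝ)+3) ∧ 1 + c ≤ Nm (p.1 * p.2)} with hZdef
    have hZcl : ∀ n, IsClosed (Z n) := by
      intro n
      have : Z n = {p : G × G | Nm p.1 ≤ 1} ∩
          ({p : G × G | Nm p.2 ≤ 1/((n:ℝ)+3)} ∩ {p : G × G | 1 + c ≤ Nm (p.1 * p.2)}) := by
        ext p; simp [hZdef, and_assoc]
      rw [this]
      exact (isClosed_le (hNc.comp continuous_fst) continuous_const).inter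
        ((isClosed_le (hNc.comp continuous_snd) continuous_const).inter
          (isClosed_le continuous_const (hNc.comp (continuous_fst.mul continuous_snd))))
    have hZsub : ∀ n, Z n ⊆ {g : G | Nm g ≤ 1} ×ˢ {g : G | Nm g ≤ 1} := by
      intro n p hp
      have hn : (1:ℝ)/((n:ℝ)+3) ≤ 1 := by
        rw [div_le_one (by positivity)]
        have : (0:ℝ) ≤ (n:ℝ) := Nat.cast_nonneg n
        linarith
      exact ⟨hp.1, hp.2.1.trans hn⟩
    have hZcomp : ∀ n, IsCompact (Z n) :=
      fun n => (hball.prod hball).of_isClosed_subset (hZcl n) (hZsub n)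
    have hZne : ∀ n, (Z n).Nonempty := by
      intro n
      have hpos : (0:ℝ) < 1/((n:ℝ)+3) := by positivity
      have hlt : (1:ℝ)/((n:ℝ)+3) < 1/2 := by
        rw [div_lt_div_iff₀ (by positivity) (by norm_num)]
        have : (0:ℝ) ≤ (n:ℝ) := Nat.cast_nonneg n
        linarith
      have hM := hcon (1/((n:ℝ)+3)) hpos hlt
      obtain ⟨z, hzS, hz⟩ := exists_lt_of_lt_csSup (hSne _ hpos.le) hM
      obtain ⟨x, y, hx, hy, rfl⟩ := hzS
      exact ⟨(x, y), hx, hy, hz.le⟩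
    have hZanti : ∀ n, Z (n+1) ⊆ Z n := by
      intro n p hp
      refine ⟨hp.1, hp.2.1.trans ?_, hp.2.2⟩
      have h1 : (0:ℝ) < (n:ℝ) + 3 := by positivity
      have h2 : ((n:ℝ)+3) ≤ (((n+1:ℕ):ℝ)+3) := by push_cast; linarith
      exact one_div_le_one_div_of_le h1 h2
    obtain ⟨p, hp⟩ := IsCompact.nonempty_iInter_of_sequence_nonempty_isCompact_isClosed
      Z hZanti hZne (hZcomp 0) hZcl
    simp only [mem_iInter] at hp
    have h2 : Nm p.2 = 0 := by
      by_contra hne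
      have hpos : 0 < Nm p.2 := (hNnn p.2).lt_of_ne (Ne.symm hne)
      obtain ⟨n, hn⟩ := exists_nat_gt (1 / Nm p.2)
      have hle := (hp n).2.1
      have h3 : 1/((n:ℝ)+3) < Nm p.2 := by
        rw [div_lt_iff₀ hpos] at hn
        rw [div_lt_iff₀ (by positivity)]
        nlinarith [Nat.cast_nonneg (α := ℝ) n]
      linarith
    have hp2 : p.2 = 1 := (hN0 _).mp h2
    have h3 := (hp 0).2.2
    rw [hp2, mul_one] at h3
    linarith [(hp 0).1]
  -- main inequality in terms of M
  have hmain : ∀ ε ∈ Set.Ico (0:ℝ) (1/2), ∀ g h : G,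
      Nm (g⁻¹ * h) < ε * Nm g → Nm h ≤ M ε * Nm g := by
    intro ε hε g h hlt
    rcases eq_or_lt_of_le (hNnn g) with hg | hg
    · exfalso
      rw [← hg, mul_zero] at hlt
      exact absurd hlt (not_lt.mpr (hNnn _))
    · have hl : (0:ℝ) < 1 / Nm g := by positivity
      have hx : Nm (δ (1/Nm g) g) ≤ 1 := by
        rw [hNδ _ _ hl]
        rw [one_div_mul_cancel (ne_of_gt hg)]
      have hy : Nm (δ (1/Nm g) (g⁻¹ * h)) ≤ ε := by
        rw [hNδ _ _ hl]
        rw [div_mul_eq_mul_div, div_le_iff₀ hg, one_mul]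
        linarith
      have hmem : Nm (δ (1/Nm g) g * δ (1/Nm g) (g⁻¹ * h)) ∈ S ε :=
        ⟨_, _, hx, hy, rfl⟩
      have hle := le_csSup (hbdd ε (by linarith [hε.2])) hmem
      rw [← hδmul _ _ _ hl, mul_inv_cancel_left, hNδ _ _ hl] at hle
      have := mul_le_mul_of_nonneg_right hle hg.le
      calc Nm h = (1 / Nm g * Nm h) * Nm g := by field_simp
        _ ≤ M ε * Nm g := this
  -- the function ζ
  refine ⟨fun ε => max (M ε) 1 - 1, ?_, ?_, ?_, ?_⟩
  · -- continuity
    intro ε hε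
    rcases eq_or_lt_of_le hε.1 with h0 | h0
    · -- ε = 0
      rw [← h0]
      have hζ0 : max (M (0:ℝ)) 1 - 1 = 0 := by rw [max_eq_right hM0]; ring
      have htend : Tendsto (fun x => max (M x) 1 - 1)
          (𝓝[Set.Ico (0:ℝ) (1/2)] 0) (𝓝 0) := by
        rw [Metric.tendsto_nhds]
        intro c hc
        obtain ⟨ε₀, hε₀pos, hε₀half, hε₀le⟩ := lem0 (c/2) (by linarith)
        have hev1 : ∀ᶠ x in 𝓝[Set.Ico (0:ℝ) (1/2)] 0, x < ε₀ :=
          (eventually_lt_nhds hε₀pos).filter_mono nhdsWithin_le_nhds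
        have hev2 : ∀ᶠ x in 𝓝[Set.Ico (0:ℝ) (1/2)] 0, x ∈ Set.Ico (0:ℝ) (1/2) :=
          eventually_mem_nhdsWithin
        filter_upwards [hev1, hev2] with x hx1 hx2
        have hMx : M x ≤ M ε₀ := hMmono x ε₀ hx2.1 hx1.le (by linarith)
        have h0x : (0:ℝ) ≤ max (M x) 1 - 1 := by
          have := le_max_right (M x) 1; linarith
        have hub : max (M x) 1 - 1 ≤ c/2 := by
          have : max (M x) 1 ≤ 1 + c/2 := max_le (by linarith) (by linarith)
          linarith
        rw [Real.dist_eq, sub_zero, abs_of_nonneg h0x]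
        linarith
      simpa [ContinuousWithinAt, hζ0] using htend
    · -- 0 < ε : Lipschitz near ε
      have hεhalf := hε.2
      set C : ℝ := 2 * max (M 1) 0 / ε with hCdef
      have hC : 0 ≤ C := by
        rw [hCdef]
        apply div_nonneg _ h0.le
        have := le_max_right (M 1) (0:ℝ)
        linarith
      have key : ∀ x y : ℝ, ε/2 ≤ y → y ≤ x → x ≤ 1 → M x - M y ≤ C * (x - y) := by
        intro x y hy hyx hx1
        have hy0 : 0 < y := lt_of_lt_of_le (by linarith) hy
        have h1 := hscale y x hy0 hyx hx1
        have hMy : M y ≤ max (M 1) 0 :=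
          (hMmono y 1 hy0.le (hyx.trans hx1) le_rfl).trans (le_max_left _ _)
        have hMy0 : 0 ≤ M y := hMnn y hy0.le (hyx.trans hx1)
        have h2 : M x - M y ≤ ((x - y)/y) * M y := by
          have he : (x/y) * M y - M y = ((x-y)/y) * M y := by field_simp
          linarith
        have e1 : (x-y)/y ≤ (x-y)/(ε/2) :=
          div_le_div_of_nonneg_left (sub_nonneg.2 hyx) (by linarith) hy
        have e2 : ((x-y)/y) * M y ≤ ((x-y)/(ε/2)) * max (M 1) 0 :=
          mul_le_mul e1 hMy hMy0 (div_nonneg (sub_nonneg.2 hyx) (by linarith))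
        have e3 : ((x-y)/(ε/2)) * max (M 1) 0 = C * (x - y) := by
          rw [hCdef]; field_simp
        linarith
      have hlip : LipschitzOnWith (Real.toNNReal C) M (Set.Icc (ε/2) 1) := by
        apply LipschitzOnWith.of_dist_le_mul
        intro x hx y hy
        rw [Real.coe_toNNReal C hC, Real.dist_eq, Real.dist_eq]
        rcases le_total y x with h | h
        · rw [abs_of_nonneg (sub_nonneg.2 (hMmono y x (by linarith [hy.1]) h hx.2)),
            abs_of_nonneg (sub_nonneg.2 h)]
          exact key x y hy.1 h hx.2
        · rw [abs_sub_comm, abs_sub_comm x y,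
            abs_of_nonneg (sub_nonneg.2 (hMmono x y (by linarith [hx.1]) h hy.2)),
            abs_of_nonneg (sub_nonneg.2 h)]
          exact key y x hx.1 h hy.2
      have hcM : ContinuousWithinAt M (Set.Icc (ε/2) 1) ε :=
        hlip.continuousOn ε ⟨by linarith, by linarith⟩
      have hmem : Set.Icc (ε/2) 1 ∈ 𝓝[Set.Ico (0:ℝ) (1/2)] ε :=
        mem_nhdsWithin_of_mem_nhds (Icc_mem_nhds (by linarith) (by linarith))
      have hcM' : ContinuousWithinAt M (Set.Ico (0:ℝ) (1/2)) ε :=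
        hcM.mono_of_mem_nhdsWithin hmem
      exact (hcM'.max continuousWithinAt_const).sub continuousWithinAt_const
  · -- monotone
    intro a ha b hb hab
    have h1 : M a ≤ M b := hMmono a b ha.1 hab (by linarith [hb.2])
    have h2 := max_le_max h1 (le_refl (1:ℝ))
    show max (M a) 1 - 1 ≤ max (M b) 1 - 1
    linarith
  · show max (M 0) 1 - 1 = 0
    rw [max_eq_right hM0]; ring
  · intro ε hε g h hlt
    have h1 := hmain ε hε g h hlt
    have h2 : M ε ≤ 1 + (max (M ε) 1 - 1) := by
      have := le_max_left (M ε) 1; linarith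
    show Nm h ≤ (1 + (max (M ε) 1 - 1)) * Nm g
    nlinarith [hNnn g]
end

section
/- Let G be a Carnot group in exponential coordinates with Haar measure ℒⁿ, let v ∈ V₁ be a nonzero horizontal vector, G⊥_v the exponential image of the subspace of 𝔤 orthogonal to v, and let ν_v : G → G⊥_v map g to the unique intersection point of the horizontal line g·exp(ℝv) with G⊥_v. Then for every measurable A ⊆ G and every g ∈ G, ℒ^{n−1}(ν_v(gA)) = ℒ^{n−1}(ν_v(A)); i.e., the (n−1)-dimensional measure of the backwards projection is invariant under left translation of A. -/
open MeasureTheory Set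

/-- The backwards projection along the horizontal line `g · exp(ℝ·e₀)` (first
coordinate direction) onto the hyperplane `{x | x 0 = 0}`, written in the
coordinates `1, …, n` of that hyperplane. -/
noncomputable def nuProj (n : ℕ)
    (mul : (Fin (n+1) → ℝ) → (Fin (n+1) → ℝ) → (Fin (n+1) → ℝ))
    (g : Fin (n+1) → ℝ) : Fin n → ℝ :=
  fun i => mul g (fun j => if j = 0 then -(g 0) else 0) i.succ

/-- A measurable "unit lower-triangular" map on `ℝⁿ` preserves Lebesgue measure. -/
theorem tri_map_volume : ∀ (n : ℕ) (T : (Fin n → ℝ) → (Fin n → ℝ)), Measurable T →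
    (∀ (i : Fin n) (x y : Fin n → ℝ), (∀ j, j < i → x j = y j) →
      T x i - x i = T y i - y i) →
    Measure.map T volume = volume := by
  intro n
  induction n with
  | zero =>
    intro T _ _
    have hT : T = id := by
      funext x i
      exact i.elim0
    rw [hT, Measure.map_id]
  | succ n ih =>
    intro T hTm hTtri
    set e := MeasurableEquiv.piFinSuccAbove (fun _ : Fin (n+1) => ℝ) 0 with he
    have hep : MeasurePreserving e volume volume :=
      volume_preserving_piFinSuccAbove (fun _ : Fin (n+1) => ℝ) 0
    -- the constant shift in coordinate 0
    set c : ℝ := T 0 0 with hc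
    have hc0 : ∀ x, T x 0 = x 0 + c := by
      intro x
      have := hTtri 0 x 0 (fun j hj => absurd hj (by simp [Fin.not_lt_zero]))
      simp only [Pi.zero_apply, sub_zero] at this
      linarith
    -- the fiber maps
    set g : ℝ → (Fin n → ℝ) → (Fin n → ℝ) :=
      fun t r i => T (e.symm (t, r)) i.succ with hg
    have heap : ∀ y : Fin (n+1) → ℝ, e y = (y 0, fun i => y i.succ) := by
      intro y
      simp only [he, MeasurableEquiv.piFinSuccAbove_apply, Fin.insertNthEquiv_symm_apply]
      exact Prod.ext rfl (funext fun i => rfl)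
    have hsymm : ∀ (t : ℝ) (r : Fin n → ℝ), e.symm (t, r) = Fin.cons t r := by
      intro t r
      simp only [he, MeasurableEquiv.piFinSuccAbove_symm_apply, Fin.insertNthEquiv_apply]
      exact Fin.insertNth_zero' t r
    have hgm : Measurable (Function.uncurry g) := by
      apply measurable_pi_lambda
      intro i
      exact (measurable_pi_apply _).comp
        (hTm.comp (e.symm.measurable.comp measurable_id))
    have hgt : ∀ t, Measure.map (g t) volume = volume := by
      intro t
      apply ih
      · exact hgm.comp (measurable_prodMk_left)
      · intro i r r' hrr
        have hxx : ∀ k : Fin (n+1), k < i.succ →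
            (Fin.cons t r : Fin (n+1) → ℝ) k = (Fin.cons t r' : Fin (n+1) → ℝ) k := by
          intro k
          refine Fin.cases (fun _ => rfl) (fun j hj => ?_) k
          simp only [Fin.cons_succ]
          exact hrr j (Fin.succ_lt_succ_iff.mp hj)
        have := hTtri i.succ (Fin.cons t r) (Fin.cons t r') hxx
        simpa [hg, hsymm, Fin.cons_succ] using this
    -- T agrees with the skew product through e
    have hS : ∀ x, e (T x) = ((e x).1 + c, g (e x).1 (e x).2) := by
      intro x
      have h1 : e.symm ((e x).1, (e x).2) = x := e.symm_apply_apply x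
      rw [heap (T x), heap x]
      refine Prod.ext (hc0 x) ?_
      funext i
      simp only [hg]
      rw [show ((((x : Fin (n+1) → ℝ) 0, fun i => x i.succ) : ℝ × (Fin n → ℝ))) = e x from (heap x).symm, h1]
    have hSkew : MeasurePreserving
        (fun p : ℝ × (Fin n → ℝ) => (p.1 + c, g p.1 p.2)) volume volume := by
      rw [Measure.volume_eq_prod]
      exact (measurePreserving_add_right volume c).skew_product hgm
        (Filter.Eventually.of_forall hgt)
    have hTp : MeasurePreserving T volume volume := by
      have : T = e.symm ∘ (fun p : ℝ × (Fin n → ℝ) => (p.1 + c, g p.1 p.2)) ∘ e := by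
        funext x
        simp only [Function.comp_apply, ← hS, e.symm_apply_apply]
      rw [this]
      exact (hep.symm e).comp (hSkew.comp hep)
    exact hTp.map_eq

/-- for a Carnot/nilpotent triangular polynomial group law on
`ℝ^{n+1}` whose first coordinate is additive (a horizontal direction `v = e₀`),
the `(n)`-dimensional Lebesgue measure of the backwards projection `ν_v` of a
measurable set onto the orthogonal hyperplane is invariant under left translation:
`ℒ(ν_v(gA)) = ℒ(ν_v(A))`. -/
theorem stmt12 (n : ℕ)
    (mul : (Fin (n+1) → ℝ) → (Fin (n+1) → ℝ) → (Fin (n+1) → ℝ))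
    (hassoc : ∀ x y z, mul (mul x y) z = mul x (mul y z))
    (hid : ∀ x, mul 0 x = x ∧ mul x 0 = x)
    (hinv : ∀ x, ∃ y, mul x y = 0 ∧ mul y x = 0)
    (htri : ∀ (i : Fin (n+1)) (x x' y y' : Fin (n+1) → ℝ),
      (∀ j, j < i → x j = y j) → (∀ j, j < i → x' j = y' j) →
      mul x x' i - x i - x' i = mul y y' i - y i - y' i)
    (h0 : ∀ x y, mul x y 0 = x 0 + y 0)
    (hcont : Continuous fun p : (Fin (n+1) → ℝ) × (Fin (n+1) → ℝ) => mul p.1 p.2)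
    (hline : ∀ s t : ℝ,
      mul (fun j => if j = 0 then s else 0) (fun j => if j = 0 then t else 0)
        = fun j => if j = 0 then s + t else 0) :
    ∀ (g : Fin (n+1) → ℝ) (A : Set (Fin (n+1) → ℝ)), MeasurableSet A →
      volume (nuProj n mul '' ((mul g) '' A)) = volume (nuProj n mul '' A) := by

  -- the horizontal line
  set L : ℝ → (Fin (n+1) → ℝ) := fun t j => if j = 0 then t else 0 with hLdef
  have hL0 : L 0 = 0 := by
    funext j; simp [hLdef]
  have hLat0 : ∀ t, L t 0 = t := by intro t; simp [hLdef]
  -- the projection to the hyperplane inside the group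
  set P : (Fin (n+1) → ℝ) → (Fin (n+1) → ℝ) := fun a => mul a (L (-(a 0))) with hPdef
  have hnu : ∀ a, nuProj n mul a = fun i => P a i.succ := fun a => rfl
  have hP0 : ∀ a, P a 0 = 0 := by
    intro a
    simp [hPdef, h0, hLat0]
  have hPmul : ∀ a t, P (mul a (L t)) = P a := by
    intro a t
    have h1 : (mul a (L t)) 0 = a 0 + t := by rw [h0, hLat0]
    simp only [hPdef, h1, hassoc, hline]
    have : (fun j => if j = 0 then t + -(a 0 + t) else 0) = L (-(a 0)) := by
      funext j; simp [hLdef]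
    rw [show mul (L t) (L (-(a 0 + t))) = _ from hline t (-(a 0 + t)), this]
  have hPa : ∀ a, mul (P a) (L (a 0)) = a := by
    intro a
    simp only [hPdef, hassoc, hline]
    have : (fun j => if j = 0 then -(a 0) + a 0 else 0) = (0 : Fin (n+1) → ℝ) := by
      funext j; simp
    rw [show mul (L (-(a 0))) (L (a 0)) = _ from hline (-(a 0)) (a 0), this]
    exact (hid a).2
  have hPP : ∀ g a, P (mul g (P a)) = P (mul g a) := by
    intro g a
    conv_rhs => rw [← hPa a, ← hassoc]
    exact (hPmul _ _).symm
  -- the embedding of the hyperplane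
  have hembnu : ∀ a, (Fin.cons 0 (nuProj n mul a) : Fin (n+1) → ℝ) = P a := by
    intro a
    funext k
    refine Fin.cases ?_ (fun j => ?_) k
    · simp [hP0 a]
    · simp [hnu]
  -- the induced map on the hyperplane
  set T : (Fin (n+1) → ℝ) → (Fin n → ℝ) → (Fin n → ℝ) :=
    fun g r => nuProj n mul (mul g (Fin.cons 0 r)) with hTdef
  have hnuT : ∀ g a, nuProj n mul (mul g a) = T g (nuProj n mul a) := by
    intro g a
    simp only [hTdef]
    rw [hembnu a]
    funext i
    show P (mul g a) i.succ = P (mul g (P a)) i.succ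
    rw [hPP]
  have hTcomp : ∀ g h r, T g (T h r) = T (mul g h) r := by
    intro g h r
    simp only [hTdef]
    rw [hembnu (mul h (Fin.cons 0 r))]
    funext i
    show P (mul g (P (mul h (Fin.cons 0 r)))) i.succ
      = P (mul (mul g h) (Fin.cons 0 r)) i.succ
    rw [hPP, hassoc]
  have hTzero : ∀ r, T 0 r = r := by
    intro r
    simp only [hTdef]
    rw [(hid _).1]
    funext i
    have hc0 : (Fin.cons (0:ℝ) r : Fin (n+1) → ℝ) 0 = 0 := rfl
    simp only [hnu, hPdef, hc0, neg_zero, hL0]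
    rw [(hid _).2]
    simp
  -- continuity / measurability of T g
  have hLcont : Continuous L := by
    apply continuous_pi
    intro j
    by_cases hj : j = 0
    · simpa [hLdef, hj] using continuous_id'
    · simpa [hLdef, hj] using (continuous_const : Continuous fun _ : ℝ => (0:ℝ))
  have hPcont : Continuous P := by
    simp only [hPdef]
    exact hcont.comp (continuous_id.prodMk
      (hLcont.comp ((continuous_apply (0 : Fin (n+1))).neg)))
  have hTm : ∀ g, Measurable (T g) := by
    intro g
    have hcons : Continuous fun r : Fin n → ℝ => (Fin.cons 0 r : Fin (n+1) → ℝ) := by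
      apply continuous_pi
      intro k
      refine Fin.cases ?_ (fun j => ?_) k
      · simpa using (continuous_const : Continuous fun _ : Fin n → ℝ => (0:ℝ))
      · simpa using continuous_apply j
    have : Continuous (T g) := by
      simp only [hTdef, hnu]
      exact continuous_pi fun i => (continuous_apply _).comp
        (hPcont.comp (hcont.comp (continuous_const.prodMk hcons)))
    exact this.measurable
  -- triangularity of T g
  have hTtri : ∀ g (i : Fin n) (r r' : Fin n → ℝ), (∀ j, j < i → r j = r' j) →
      T g r i - r i = T g r' i - r' i := by
    intro g i r r' hrr
    set x : Fin (n+1) → ℝ := Fin.cons 0 r with hx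
    set x' : Fin (n+1) → ℝ := Fin.cons 0 r' with hx'
    have hxx : ∀ k : Fin (n+1), k < i.succ → x k = x' k := by
      intro k
      refine Fin.cases (fun _ => rfl) (fun j hj => ?_) k
      simp only [hx, hx', Fin.cons_succ]
      exact hrr j (Fin.succ_lt_succ_iff.mp hj)
    have haa : ∀ k : Fin (n+1), k < i.succ → mul g x k = mul g x' k := by
      intro k hk
      have h1 := htri k g x g x' (fun j _ => rfl)
        (fun j hj => hxx j (lt_trans hj hk))
      have h2 := hxx k hk
      linarith
    have ha0 : mul g x 0 = mul g x' 0 := haa 0 (Fin.succ_pos i)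
    have hstep : mul g x i.succ - x i.succ = mul g x' i.succ - x' i.succ := by
      have h1 := htri i.succ g x g x' (fun j _ => rfl) hxx
      linarith
    have htop : P (mul g x) i.succ - mul g x i.succ
        = P (mul g x') i.succ - mul g x' i.succ := by
      have h1 := htri i.succ (mul g x) (L (-(mul g x 0))) (mul g x')
        (L (-(mul g x 0))) haa (fun j _ => rfl)
      simp only [hPdef, ha0] at h1 ⊢
      linarith
    have hri : x i.succ = r i := rfl
    have hri' : x' i.succ = r' i := rfl
    have hT1 : T g r i = P (mul g x) i.succ := rfl
    have hT2 : T g r' i = P (mul g x') i.succ := rfl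
    rw [hT1, hT2, ← hri, ← hri']
    linarith
  -- T g is measure preserving
  have hTmap : ∀ g, Measure.map (T g) volume = volume := fun g =>
    tri_map_volume n (T g) (hTm g) (hTtri g)
  -- main argument
  intro g A _
  obtain ⟨g', hgg', hg'g⟩ := hinv g
  -- T g as a measurable equivalence
  let E : (Fin n → ℝ) ≃ᵐ (Fin n → ℝ) :=
    { toFun := T g
      invFun := T g'
      left_inv := fun r => by rw [hTcomp, hg'g, hTzero]
      right_inv := fun r => by rw [hTcomp, hgg', hTzero]
      measurable_toFun := hTm g
      measurable_invFun := hTm g' }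
  have himg : nuProj n mul '' ((mul g) '' A) = T g '' (nuProj n mul '' A) := by
    rw [Set.image_image, Set.image_image]
    exact Set.image_congr fun a _ => hnuT g a
  rw [himg]
  have hmapsymm : Measure.map (⇑E.symm) volume = volume := by
    have h2 : Measure.map (⇑E) volume = volume := hTmap g
    have h1 : Measure.map (⇑E.symm) (Measure.map (⇑E) volume) = volume := by
      rw [Measure.map_map E.symm.measurable E.measurable]
      have h3 : (⇑E.symm) ∘ (⇑E) = id := by
        funext r; exact E.symm_apply_apply r
      rw [h3, Measure.map_id]
    rw [h2] at h1
    exact h1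
  have hpre : T g '' (nuProj n mul '' A) = ⇑E.symm ⁻¹' (nuProj n mul '' A) := by
    exact Equiv.image_eq_preimage_symm E.toEquiv _
  rw [hpre, ← MeasurableEquiv.map_apply E.symm, hmapsymm]
end

section
/- Let G be a Carnot group with homogeneous semi-metric d (left-invariant, homogeneous under dilations, with quasi-triangle constant C₀), homogeneous dimension Q, and ν = ν_v the backwards projection along a fixed horizontal direction v onto the orthogonal hyperplane G⊥_v. Then there exists a constant c₁ > 0, depending only on v, G, and d, such that ℒ^{n−1}(ν(B(g,r))) = c₁ r^{Q−1} for every g ∈ G and r > 0. -/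
open MeasureTheory Set

/-- A shear `(t, y) ↦ (t + c y, y)` preserves `volume.prod μ`. -/
lemma shear_mp {α : Type*} [MeasurableSpace α] (μ : Measure α) [SigmaFinite μ]
    (c : α → ℝ) (hc : Measurable c) :
    MeasurePreserving (fun p : ℝ × α => (p.1 + c p.2, p.2))
      ((volume : Measure ℝ).prod μ) ((volume : Measure ℝ).prod μ) := by
  have hm : Measurable fun p : ℝ × α => (p.1 + c p.2, p.2) :=
    (measurable_fst.add (hc.comp measurable_snd)).prodMk measurable_snd
  refine ⟨hm, ?_⟩
  refine Measure.ext fun s hs => ?_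
  rw [Measure.map_apply hm hs]
  rw [Measure.prod_apply_symm (hm hs), Measure.prod_apply_symm hs]
  congr 1
  funext y
  have : (fun x : ℝ => (x, y)) ⁻¹' ((fun p : ℝ × α => (p.1 + c p.2, p.2)) ⁻¹' s)
      = (fun x : ℝ => x + c y) ⁻¹' ((fun x : ℝ => (x, y)) ⁻¹' s) := rfl
  rw [this, measure_preimage_add_right]

/-- A continuous triangular map (each coordinate is the identity plus a function of
the earlier coordinates) preserves Lebesgue measure on `Fin n → ℝ`. -/
lemma triangular_mp : ∀ (n : ℕ) (f : (Fin n → ℝ) → (Fin n → ℝ)), Continuous f →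
    (∀ (i : Fin n) (x y : Fin n → ℝ), (∀ j, j < i → x j = y j) → f x i - x i = f y i - y i) →
    MeasurePreserving f volume volume := by
  intro n
  induction n with
  | zero =>
    intro f hf ht
    have : f = id := funext fun x => Subsingleton.elim _ _
    rw [this]; exact MeasurePreserving.id _
  | succ n IH =>
    intro f hf ht
    set f' : (Fin n → ℝ) → (Fin n → ℝ) := fun y i => f (Fin.snoc y 0) i.castSucc with hf'def
    set c : (Fin n → ℝ) → ℝ := fun y => f (Fin.snoc y 0) (Fin.last n) with hcdef
    have hsnoc : ∀ (x : Fin (n+1) → ℝ) (j : Fin (n+1)), j < Fin.last n →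
        x j = (Fin.snoc (fun k => x (Fin.castSucc k)) (0:ℝ) : Fin (n+1) → ℝ) j := by
      intro x j hj
      rcases Fin.exists_castSucc_eq.mpr (Fin.ne_last_of_lt hj) with ⟨k, rfl⟩
      simp
    have hkey : ∀ x : Fin (n+1) → ℝ,
        f x = Fin.snoc (f' (fun k => x (Fin.castSucc k)))
          (x (Fin.last n) + c (fun k => x (Fin.castSucc k))) := by
      intro x
      funext j
      induction j using Fin.lastCases with
      | last =>
        rw [Fin.snoc_last]
        have := ht (Fin.last n) x (Fin.snoc (fun k => x (Fin.castSucc k)) (0:ℝ))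
          (fun j hj => hsnoc x j hj)
        simp only [Fin.snoc_last, sub_zero] at this
        rw [hcdef]
        linarith
      | cast k =>
        rw [Fin.snoc_castSucc]
        have := ht (Fin.castSucc k) x (Fin.snoc (fun k => x (Fin.castSucc k)) (0:ℝ))
          (fun j hj => hsnoc x j (hj.trans (Fin.castSucc_lt_last k)))
        simp only [Fin.snoc_castSucc] at this
        rw [hf'def]
        simp only
        linarith
    have ht' : ∀ (i : Fin n) (x y : Fin n → ℝ), (∀ j, j < i → x j = y j) →
        f' x i - x i = f' y i - y i := by
      intro i x y hxy
      have hagree : ∀ j, j < Fin.castSucc i →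
          (Fin.snoc x (0:ℝ) : Fin (n+1) → ℝ) j = (Fin.snoc y (0:ℝ) : Fin (n+1) → ℝ) j := by
        intro j hj
        rcases Fin.exists_castSucc_eq.mpr
          (Fin.ne_last_of_lt (hj.trans (Fin.castSucc_lt_last i))) with ⟨m, rfl⟩
        simp only [Fin.snoc_castSucc]
        exact hxy m (by exact_mod_cast (Fin.castSucc_lt_castSucc_iff.mp hj))
      have := ht (Fin.castSucc i) (Fin.snoc x 0) (Fin.snoc y 0) hagree
      simp only [Fin.snoc_castSucc] at this
      exact this
    have hsnocc : Continuous fun y : Fin n → ℝ => (Fin.snoc y (0:ℝ) : Fin (n+1) → ℝ) := by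
      apply continuous_pi
      intro j
      induction j using Fin.lastCases with
      | last => simpa using continuous_const
      | cast k => simpa using continuous_apply k
    have hf'c : Continuous f' := by
      apply continuous_pi
      intro i
      exact (continuous_apply (Fin.castSucc i)).comp (hf.comp hsnocc)
    have hcc : Continuous c := (continuous_apply (Fin.last n)).comp (hf.comp hsnocc)
    have hmp' : MeasurePreserving f' volume volume := IH f' hf'c ht'
    have hF : MeasurePreserving
        (fun p : ℝ × (Fin n → ℝ) => (p.1 + c p.2, f' p.2))
        ((volume : Measure ℝ).prod volume) ((volume : Measure ℝ).prod volume) := by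
      have h1 := shear_mp (volume : Measure (Fin n → ℝ)) c hcc.measurable
      have h2 : MeasurePreserving (Prod.map (id : ℝ → ℝ) f')
          ((volume : Measure ℝ).prod volume) ((volume : Measure ℝ).prod volume) :=
        (MeasurePreserving.id _).prod hmp'
      have : (fun p : ℝ × (Fin n → ℝ) => (p.1 + c p.2, f' p.2))
          = (Prod.map (id : ℝ → ℝ) f') ∘ (fun p : ℝ × (Fin n → ℝ) => (p.1 + c p.2, p.2)) := rfl
      rw [this]
      exact h2.comp h1
    set e := MeasurableEquiv.piFinSuccAbove (fun _ : Fin (n+1) => ℝ) (Fin.last n) with hedef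
    have hpe : MeasurePreserving e volume volume :=
      volume_preserving_piFinSuccAbove (fun _ : Fin (n+1) => ℝ) (Fin.last n)
    have hfeq : f = e.symm ∘ (fun p : ℝ × (Fin n → ℝ) => (p.1 + c p.2, f' p.2)) ∘ e := by
      funext x
      have he1 : e x = (x (Fin.last n), fun k => x (Fin.castSucc k)) := by
        show (Fin.insertNthEquiv (fun _ => ℝ) (Fin.last n)).symm x
          = (x (Fin.last n), fun k => x (Fin.castSucc k))
        rw [Fin.insertNthEquiv_last]
        rfl
      have he2 : ∀ (t : ℝ) (y : Fin n → ℝ), e.symm (t, y) = Fin.snoc y t := by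
        intro t y
        simp [hedef, MeasurableEquiv.piFinSuccAbove, Fin.insertNth_last, Fin.snocEquiv]
      simp only [Function.comp_apply, he1, he2]
      exact hkey x
    rw [hfeq]
    have hvol : (volume : Measure (ℝ × (Fin n → ℝ))) = (volume : Measure ℝ).prod volume :=
      rfl
    exact (hpe.symm e).comp (by rw [hvol] at *; exact hF.comp hpe)

/-- the one-parameter horizontal subgroup -/
noncomputable def expo (n : ℕ) (t : ℝ) : Fin (n+1) → ℝ := fun j => if j = 0 then t else 0

/-- inclusion of the hyperplane -/
noncomputable def iot (n : ℕ) (x : Fin n → ℝ) : Fin (n+1) → ℝ := Fin.cons 0 x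

/-- the map induced on the hyperplane by left translation by `g` -/
noncomputable def Tmap (n : ℕ)
    (mul : (Fin (n+1) → ℝ) → (Fin (n+1) → ℝ) → (Fin (n+1) → ℝ))
    (g : Fin (n+1) → ℝ) (x : Fin n → ℝ) : Fin n → ℝ :=
  nuProj n mul (mul g (iot n x))

section lems
variable {n : ℕ} {mul : (Fin (n+1) → ℝ) → (Fin (n+1) → ℝ) → (Fin (n+1) → ℝ)}

lemma nuProj_eq (g : Fin (n+1) → ℝ) :
    nuProj n mul g = fun i => mul g (expo n (-(g 0))) i.succ := rfl

lemma expo_zero : expo n 0 = 0 := by funext j; simp [expo]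

lemma iot_zero (x : Fin n → ℝ) : iot n x 0 = 0 := rfl

lemma iot_succ (x : Fin n → ℝ) (i : Fin n) : iot n x i.succ = x i := by
  simp [iot]

lemma expo_add
    (hline : ∀ s t : ℝ,
      mul (fun j => if j = 0 then s else 0) (fun j => if j = 0 then t else 0)
        = fun j => if j = 0 then s + t else 0) (s t : ℝ) :
    mul (expo n s) (expo n t) = expo n (s + t) := hline s t

lemma nu_line
    (hassoc : ∀ x y z, mul (mul x y) z = mul x (mul y z))
    (h0 : ∀ x y, mul x y 0 = x 0 + y 0)
    (hline : ∀ s t : ℝ,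
      mul (fun j => if j = 0 then s else 0) (fun j => if j = 0 then t else 0)
        = fun j => if j = 0 then s + t else 0)
    (h : Fin (n+1) → ℝ) (t : ℝ) :
    nuProj n mul (mul h (expo n t)) = nuProj n mul h := by
  have h00 : (mul h (expo n t)) 0 = h 0 + t := by rw [h0]; simp [expo]
  rw [nuProj_eq, nuProj_eq, h00]
  have : mul (mul h (expo n t)) (expo n (-(h 0 + t))) = mul h (expo n (-(h 0))) := by
    rw [hassoc, expo_add hline]
    ring_nf
  rw [this]

lemma iot_nu
    (h0 : ∀ x y, mul x y 0 = x 0 + y 0)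
    (h : Fin (n+1) → ℝ) :
    iot n (nuProj n mul h) = mul h (expo n (-(h 0))) := by
  funext j
  refine Fin.cases ?_ ?_ j
  · rw [iot_zero, h0]; simp [expo]
  · intro i; rw [iot_succ]; rfl

lemma nu_iot
    (hid : ∀ x, mul 0 x = x ∧ mul x 0 = x)
    (x : Fin n → ℝ) :
    nuProj n mul (iot n x) = x := by
  funext i
  rw [nuProj_eq]
  simp only [iot_zero, neg_zero, expo_zero, (hid (iot n x)).2]
  exact iot_succ x i

lemma nu_mul
    (hassoc : ∀ x y z, mul (mul x y) z = mul x (mul y z))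
    (h0 : ∀ x y, mul x y 0 = x 0 + y 0)
    (hline : ∀ s t : ℝ,
      mul (fun j => if j = 0 then s else 0) (fun j => if j = 0 then t else 0)
        = fun j => if j = 0 then s + t else 0)
    (g h : Fin (n+1) → ℝ) :
    nuProj n mul (mul g h) = Tmap n mul g (nuProj n mul h) := by
  unfold Tmap
  rw [iot_nu h0, ← hassoc, nu_line hassoc h0 hline]

lemma nu_zero
    (hid : ∀ x, mul 0 x = x ∧ mul x 0 = x) :
    nuProj n mul 0 = 0 := by
  funext i
  rw [nuProj_eq]
  simp only [Pi.zero_apply, neg_zero, expo_zero, (hid 0).2]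

lemma Tmap_triangular
    (htri : ∀ (i : Fin (n+1)) (x x' y y' : Fin (n+1) → ℝ),
      (∀ j, j < i → x j = y j) → (∀ j, j < i → x' j = y' j) →
      mul x x' i - x i - x' i = mul y y' i - y i - y' i)
    (h0 : ∀ x y, mul x y 0 = x 0 + y 0)
    (g : Fin (n+1) → ℝ) (i : Fin n) (x y : Fin n → ℝ)
    (hxy : ∀ j, j < i → x j = y j) :
    Tmap n mul g x i - x i = Tmap n mul g y i - y i := by
  have h00 : ∀ z : Fin n → ℝ, (mul g (iot n z)) 0 = g 0 := by
    intro z; rw [h0, iot_zero, add_zero]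
  have hagree : ∀ j, j < (i.succ : Fin (n+1)) → iot n x j = iot n y j := by
    intro j
    refine Fin.cases ?_ ?_ j
    · intro _; rfl
    · intro k hk
      rw [iot_succ, iot_succ]
      exact hxy k (by exact_mod_cast Fin.succ_lt_succ_iff.mp hk)
  have hcongr : ∀ j, j < (i.succ : Fin (n+1)) →
      mul g (iot n x) j = mul g (iot n y) j := by
    intro j hj
    have h1 := htri j g (iot n x) g (iot n y) (fun _ _ => rfl)
      (fun k hk => hagree k (hk.trans hj))
    have h2 := hagree j hj
    linarith
  have h1 := htri i.succ (mul g (iot n x)) (expo n (-(g 0)))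
    (mul g (iot n y)) (expo n (-(g 0))) hcongr (fun _ _ => rfl)
  have h2 := htri i.succ g (iot n x) g (iot n y) (fun _ _ => rfl) hagree
  have e1 : iot n x i.succ = x i := iot_succ x i
  have e2 : iot n y i.succ = y i := iot_succ y i
  have goal1 : Tmap n mul g x i = mul (mul g (iot n x)) (expo n (-(g 0))) i.succ := by
    unfold Tmap
    rw [nuProj_eq, h00 x]
  have goal2 : Tmap n mul g y i = mul (mul g (iot n y)) (expo n (-(g 0))) i.succ := by
    unfold Tmap
    rw [nuProj_eq, h00 y]
  rw [goal1, goal2]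
  rw [e1] at h2
  rw [e2] at h2
  linarith

lemma expo_continuous : Continuous (expo n) := by
  apply continuous_pi
  intro j
  by_cases h : j = 0 <;> simp [expo, h] <;> [exact continuous_id; exact continuous_const]

lemma iot_continuous : Continuous (iot n) := by
  apply continuous_pi
  intro j
  refine Fin.cases ?_ ?_ j
  · simp only [iot_zero]; exact continuous_const
  · intro k
    simp only [iot_succ]
    exact continuous_apply k

lemma nu_continuous
    (hcont : Continuous fun p : (Fin (n+1) → ℝ) × (Fin (n+1) → ℝ) => mul p.1 p.2) :
    Continuous (nuProj n mul) := by
  have hm : Continuous fun h : Fin (n+1) → ℝ => mul h (expo n (-(h 0))) :=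
    hcont.comp (continuous_id.prodMk (expo_continuous.comp (continuous_apply 0).neg))
  exact continuous_pi fun i => (continuous_apply i.succ).comp hm

lemma Tmap_continuous
    (hcont : Continuous fun p : (Fin (n+1) → ℝ) × (Fin (n+1) → ℝ) => mul p.1 p.2)
    (g : Fin (n+1) → ℝ) : Continuous (Tmap n mul g) :=
  (nu_continuous hcont).comp (hcont.comp (continuous_const.prodMk iot_continuous))

lemma nu_dil
    (w : Fin (n+1) → ℕ) (hw0 : w 0 = 1)
    (hδmul : ∀ (l : ℝ) (x y : Fin (n+1) → ℝ), 0 < l →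
      mul (fun i => l ^ (w i) * x i) (fun i => l ^ (w i) * y i)
        = fun i => l ^ (w i) * mul x y i)
    (l : ℝ) (hl : 0 < l) (h : Fin (n+1) → ℝ) :
    nuProj n mul (fun i => l ^ (w i) * h i) = fun i => l ^ (w i.succ) * nuProj n mul h i := by
  have hdexpo : ∀ t : ℝ, expo n (l * t) = fun i => l ^ (w i) * expo n t i := by
    intro t; funext j
    by_cases hj : j = 0 <;> simp [expo, hj, hw0]
  have hd0 : (fun i => l ^ (w i) * h i) 0 = l * h 0 := by simp [hw0]
  funext i
  rw [nuProj_eq, nuProj_eq]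
  simp only [hd0]
  have : expo n (-(l * h 0)) = fun i => l ^ (w i) * expo n (-(h 0)) i := by
    rw [← hdexpo]; ring_nf
  rw [this, hδmul l h (expo n (-(h 0))) hl]

end lems

/-- in a Carnot group (triangular polynomial group law on `ℝ^{n+1}`,
homogeneous norm `Nm` with weighted dilations compatible with the group law, the
horizontal direction `e₀` having weight 1), the measure of the backwards
projection of a ball of the homogeneous (semi-)metric `d(g,h) = Nm(g⁻¹h)` is
`ℒ(ν(B(g,r))) = c₁ · r^{Q−1}`, with `Q = Σ w i` the homogeneous dimension. -/
theorem stmt13 (n : ℕ)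
    (mul : (Fin (n+1) → ℝ) → (Fin (n+1) → ℝ) → (Fin (n+1) → ℝ))
    (inv : (Fin (n+1) → ℝ) → (Fin (n+1) → ℝ))
    (hassoc : ∀ x y z, mul (mul x y) z = mul x (mul y z))
    (hid : ∀ x, mul 0 x = x ∧ mul x 0 = x)
    (hinv : ∀ x, mul x (inv x) = 0 ∧ mul (inv x) x = 0)
    (htri : ∀ (i : Fin (n+1)) (x x' y y' : Fin (n+1) → ℝ),
      (∀ j, j < i → x j = y j) → (∀ j, j < i → x' j = y' j) →
      mul x x' i - x i - x' i = mul y y' i - y i - y' i)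
    (h0 : ∀ x y, mul x y 0 = x 0 + y 0)
    (hcont : Continuous fun p : (Fin (n+1) → ℝ) × (Fin (n+1) → ℝ) => mul p.1 p.2)
    (hline : ∀ s t : ℝ,
      mul (fun j => if j = 0 then s else 0) (fun j => if j = 0 then t else 0)
        = fun j => if j = 0 then s + t else 0)
    (w : Fin (n+1) → ℕ) (hw : ∀ i, 1 ≤ w i) (hw0 : w 0 = 1)
    (Nm : (Fin (n+1) → ℝ) → ℝ)
    (hNc : Continuous Nm) (hNnn : ∀ x, 0 ≤ Nm x)
    (hN0 : ∀ x, Nm x = 0 ↔ x = 0)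
    (hNδ : ∀ (l : ℝ) (x : Fin (n+1) → ℝ), 0 < l →
      Nm (fun i => l ^ (w i) * x i) = l * Nm x)
    (hδmul : ∀ (l : ℝ) (x y : Fin (n+1) → ℝ), 0 < l →
      mul (fun i => l ^ (w i) * x i) (fun i => l ^ (w i) * y i)
        = fun i => l ^ (w i) * mul x y i)
    (hcompact : IsCompact {x : Fin (n+1) → ℝ | Nm x ≤ 1}) :
    ∃ c₁ > 0, ∀ (g : Fin (n+1) → ℝ) (r : ℝ), 0 < r →
      volume (nuProj n mul '' {h | Nm (mul (inv g) h) < r})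
        = ENNReal.ofReal (c₁ * r ^ ((∑ i, w i) - 1)) := by
  classical
  set S₁ := nuProj n mul '' {h | Nm h < 1} with hS₁
  have hNopen : IsOpen {h : Fin (n+1) → ℝ | Nm h < 1} := isOpen_lt hNc continuous_const
  -- S₁ is open
  have hS₁open : IsOpen S₁ := by
    rw [hS₁, isOpen_iff_mem_nhds]
    rintro x ⟨h, hh, rfl⟩
    have hc2 : Continuous fun y : Fin n → ℝ => mul (iot n y) (expo n (h 0)) :=
      hcont.comp (iot_continuous.prodMk continuous_const)
    refine mem_nhds_iff.mpr
      ⟨(fun y => mul (iot n y) (expo n (h 0))) ⁻¹' {z | Nm z < 1}, ?_,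
        hNopen.preimage hc2, ?_⟩
    · rintro y hy
      exact ⟨mul (iot n y) (expo n (h 0)), hy,
        by rw [nu_line hassoc h0 hline, nu_iot hid]⟩
    · show mul (iot n (nuProj n mul h)) (expo n (h 0)) ∈ {z | Nm z < 1}
      have : mul (iot n (nuProj n mul h)) (expo n (h 0)) = h := by
        rw [iot_nu h0, hassoc, expo_add hline, neg_add_cancel, expo_zero]
        exact (hid h).2
      rwa [this]
  -- 0 ∈ S₁
  have h0S : (0 : Fin n → ℝ) ∈ S₁ := by
    refine ⟨0, ?_, nu_zero hid⟩
    show Nm 0 < 1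
    rw [(hN0 0).mpr rfl]
    exact zero_lt_one
  have hpos : volume S₁ ≠ 0 := (hS₁open.measure_pos volume ⟨0, h0S⟩).ne'
  have hfin : volume S₁ ≠ ⊤ := by
    have hsub : S₁ ⊆ nuProj n mul '' {x | Nm x ≤ 1} :=
      image_mono (fun h (hh : Nm h < 1) => le_of_lt hh)
    exact ((measure_mono hsub).trans_lt
      (hcompact.image (nu_continuous hcont)).measure_lt_top).ne
  refine ⟨(volume S₁).toReal, ENNReal.toReal_pos hpos hfin, ?_⟩
  intro g r hr
  -- ball decomposition
  have hball1 : {h | Nm (mul (inv g) h) < r} = mul g '' {h | Nm h < r} := by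
    ext h
    simp only [mem_setOf_eq, mem_image]
    constructor
    · intro hh
      exact ⟨mul (inv g) h, hh, by rw [← hassoc, (hinv g).1, (hid h).1]⟩
    · rintro ⟨h', hh', rfl⟩
      rwa [← hassoc, (hinv g).2, (hid h').1]
  have hball2 : {h : Fin (n+1) → ℝ | Nm h < r}
      = (fun (h : Fin (n+1) → ℝ) i => r ^ (w i) * h i) '' {h | Nm h < 1} := by
    ext h
    simp only [mem_setOf_eq, mem_image]
    constructor
    · intro hh
      refine ⟨fun i => r⁻¹ ^ (w i) * h i, ?_, ?_⟩
      · rw [hNδ r⁻¹ h (inv_pos.mpr hr)]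
        have := (div_lt_one hr).mpr hh
        rwa [div_eq_inv_mul] at this
      · funext i
        rw [← mul_assoc, ← mul_pow, mul_inv_cancel₀ hr.ne', one_pow, one_mul]
    · rintro ⟨h', hh', rfl⟩
      rw [hNδ r h' hr]
      have := (mul_lt_mul_iff_right₀ hr).mpr hh'
      rwa [mul_one] at this
  -- image decomposition
  have himg : nuProj n mul '' {h | Nm (mul (inv g) h) < r}
      = Tmap n mul g '' ((fun (x : Fin n → ℝ) (i : Fin n) => r ^ (w i.succ) * x i) '' S₁) := by
    rw [hball1, hball2, hS₁]
    have lhs_eq : nuProj n mul '' (mul g ''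
          ((fun (h : Fin (n+1) → ℝ) i => r ^ (w i) * h i) '' {h | Nm h < 1}))
        = (fun h => nuProj n mul (mul g (fun i => r ^ (w i) * h i))) '' {h | Nm h < 1} := by
      rw [Set.image_image, Set.image_image]
    have rhs_eq : Tmap n mul g '' ((fun (x : Fin n → ℝ) (i : Fin n) => r ^ (w i.succ) * x i) ''
          (nuProj n mul '' {h | Nm h < 1}))
        = (fun h => Tmap n mul g (fun i => r ^ (w i.succ) * nuProj n mul h i)) ''
            {h | Nm h < 1} := by
      rw [Set.image_image, Set.image_image]
    rw [lhs_eq, rhs_eq]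
    apply image_congr
    intro h _
    rw [nu_mul hassoc h0 hline, nu_dil w hw0 hδmul r hr]
  -- the dilated set is open
  have hdilpre : (fun (x : Fin n → ℝ) (i : Fin n) => r ^ (w i.succ) * x i) '' S₁
      = (fun (x : Fin n → ℝ) (i : Fin n) => r⁻¹ ^ (w i.succ) * x i) ⁻¹' S₁ := by
    ext x
    constructor
    · rintro ⟨a, ha, rfl⟩
      have hx : (fun i => r⁻¹ ^ (w i.succ) * (r ^ (w i.succ) * a i)) = a := by
        funext i
        rw [← mul_assoc, ← mul_pow, inv_mul_cancel₀ hr.ne', one_pow, one_mul]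
      show (fun i => r⁻¹ ^ (w i.succ) * (r ^ (w i.succ) * a i)) ∈ S₁
      rwa [hx]
    · intro hx
      refine ⟨fun i => r⁻¹ ^ (w i.succ) * x i, hx, ?_⟩
      funext i
      show r ^ (w i.succ) * (r⁻¹ ^ (w i.succ) * x i) = x i
      rw [← mul_assoc, ← mul_pow, mul_inv_cancel₀ hr.ne', one_pow, one_mul]
  have hAopen : IsOpen ((fun (x : Fin n → ℝ) (i : Fin n) => r ^ (w i.succ) * x i) '' S₁) := by
    rw [hdilpre]
    exact hS₁open.preimage (continuous_pi fun i => continuous_const.mul (continuous_apply i))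
  -- translation invariance
  have hTinv1 : ∀ x, Tmap n mul g (Tmap n mul (inv g) x) = x := by
    intro x
    have e1 : Tmap n mul (inv g) x = nuProj n mul (mul (inv g) (iot n x)) := rfl
    rw [e1, ← nu_mul hassoc h0 hline,
      show mul g (mul (inv g) (iot n x)) = iot n x from by
        rw [← hassoc, (hinv g).1, (hid _).1],
      nu_iot hid]
  have hTinv2 : ∀ x, Tmap n mul (inv g) (Tmap n mul g x) = x := by
    intro x
    have e1 : Tmap n mul g x = nuProj n mul (mul g (iot n x)) := rfl
    rw [e1, ← nu_mul hassoc h0 hline,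
      show mul (inv g) (mul g (iot n x)) = iot n x from by
        rw [← hassoc, (hinv g).2, (hid _).1],
      nu_iot hid]
  have hTg : MeasurePreserving (Tmap n mul (inv g)) volume volume :=
    triangular_mp n _ (Tmap_continuous hcont (inv g))
      (fun i x y hxy => Tmap_triangular htri h0 (inv g) i x y hxy)
  have hTimg : ∀ A : Set (Fin n → ℝ),
      Tmap n mul g '' A = Tmap n mul (inv g) ⁻¹' A := by
    intro A
    ext x
    constructor
    · rintro ⟨a, ha, rfl⟩
      show Tmap n mul (inv g) (Tmap n mul g a) ∈ A
      rwa [hTinv2]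
    · intro hx
      exact ⟨Tmap n mul (inv g) x, hx, hTinv1 x⟩
  have hmeasT : volume (Tmap n mul g ''
        ((fun (x : Fin n → ℝ) (i : Fin n) => r ^ (w i.succ) * x i) '' S₁))
      = volume ((fun (x : Fin n → ℝ) (i : Fin n) => r ^ (w i.succ) * x i) '' S₁) := by
    rw [hTimg]
    exact hTg.measure_preimage hAopen.measurableSet.nullMeasurableSet
  -- scaling
  have hsum : ∑ i : Fin n, w i.succ = (∑ i, w i) - 1 := by
    have := Fin.sum_univ_succ w
    omega
  have hdet : volume ((fun (x : Fin n → ℝ) (i : Fin n) => r ^ (w i.succ) * x i) '' S₁)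
      = ENNReal.ofReal (r ^ ((∑ i, w i) - 1)) * volume S₁ := by
    have hL : (fun (x : Fin n → ℝ) (i : Fin n) => r ^ (w i.succ) * x i)
        = fun x => Matrix.toLin' (Matrix.diagonal fun i : Fin n => r ^ (w i.succ)) x := by
      funext x
      funext i
      simp [Matrix.toLin'_apply, Matrix.mulVec_diagonal]
    rw [hL]
    have := Measure.addHaar_image_linearMap (volume : Measure (Fin n → ℝ))
      (Matrix.toLin' (Matrix.diagonal fun i : Fin n => r ^ (w i.succ))) S₁
    rw [this]
    congr 2
    rw [LinearMap.det_toLin', Matrix.det_diagonal, Finset.prod_pow_eq_pow_sum, hsum,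
      abs_of_nonneg (pow_nonneg hr.le _)]
  rw [himg, hmeasT, hdet, ENNReal.ofReal_mul ENNReal.toReal_nonneg,
    ENNReal.ofReal_toReal hfin, mul_comm]
end

section
/- Let (X, d, μ) be a doubling metric measure space and let Δ = {Q_ω^k} be a Christ dyadic decomposition with constants τ > 1, C₁ > 0, η > 0; in particular each cube Q of level −k satisfies B(z_Q, τ^{−k}) ⊆ Q ⊆ B(z_Q, τ^{−k+2}) and μ{x ∉ Q : d(x,Q) ≤ tτ^{−k}} ≤ C₁ t^η μ(Q). Let A ⊂ B(0,1) be measurable with μ(A) > 0, let ζ = 1 on A and ζ = β₀ > 1 off A, let 𝒯_k be the cubes of level −k contained in B(0,1), 𝒯_k' = {Q ∈ 𝒯_k : (1/μ(Q))∫_Q ζ dμ < (1+β₀)/2}, and R_k = ∪_{Q ∈ 𝒯_k'} Q. Then for any sets A_k with R_k ⊆ A_k ⊆ B(R_k, k⁻¹ τ^{−k}), the sequence A_k converges to A in measure: μ(A_k △ A) → 0 as k → ∞. -/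
open MeasureTheory Metric Set Filter Classical Topology NNReal ENNReal

/-- Christ dyadic cubes and convergence in measure.  Given a Christ
dyadic decomposition of a doubling metric measure space (each level-`−k` cube
sandwiched between balls of radii `τ^{−k}` and `τ^{−k+2}`, with the small-boundaries
property), a measurable `A ⊆ B(x₀,1)` of positive measure, `ζ = 1` on `A` and `β₀`
off `A`, the unions `R_k` of level-`−k` cubes inside `B(x₀,1)` whose `ζ`-average is
`< (1+β₀)/2`, and any sets `A_k` with `R_k ⊆ A_k ⊆ B(R_k, k⁻¹τ^{−k})`, the sequence
`A_k` converges to `A` in measure. -/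

theorem stmt15 {X : Type*} [MetricSpace X] [MeasurableSpace X] [BorelSpace X]
    [ProperSpace X]
    (μ : Measure X) [IsUnifLocDoublingMeasure μ] [IsFiniteMeasureOnCompacts μ]
    (τ C₁ η : ℝ) (hτ : 1 < τ) (hC₁ : 0 < C₁) (hη : 0 < η)
    (cubes : ℕ → Set (Set X))
    (hmeas : ∀ k, ∀ Q ∈ cubes k, MeasurableSet Q)
    (hdisj : ∀ k, (cubes k).PairwiseDisjoint id)
    (hcover : ∀ k, μ (Set.univ \ ⋃₀ cubes k) = 0)
    (hsand : ∀ k, ∀ Q ∈ cubes k, ∃ z : X,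
      ball z (τ ^ (-(k : ℤ))) ⊆ Q ∧ Q ⊆ ball z (τ ^ (-(k : ℤ) + 2)))
    (hsmall : ∀ k, ∀ Q ∈ cubes k, ∀ t ∈ Set.Ioo (0 : ℝ) 1,
      μ {x | x ∉ Q ∧ infDist x Q ≤ t * τ ^ (-(k : ℤ))}
        ≤ ENNReal.ofReal (C₁ * t ^ η) * μ Q)
    (x₀ : X) (β₀ : ℝ) (hβ₀ : 1 < β₀)
    (A : Set X) (hA : A ⊆ ball x₀ 1) (hAm : MeasurableSet A) (hApos : 0 < μ A) :
    letI ζ : X → ℝ := fun x => if x ∈ A then 1 else β₀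
    letI R : ℕ → Set X := fun k =>
      ⋃₀ {Q ∈ cubes k | Q ⊆ ball x₀ 1 ∧
        (∫ x in Q, ζ x ∂μ) < (1 + β₀) / 2 * (μ Q).toReal}
    ∀ Ak : ℕ → Set X,
      (∀ k, R k ⊆ Ak k) →
      (∀ k, Ak k ⊆ R k ∪ thickening ((k : ℝ)⁻¹ * τ ^ (-(k : ℤ))) (R k)) →
      Tendsto (fun k => μ (symmDiff (Ak k) A)) atTop (nhds 0) := by
  intro Ak hRAk hAkR
  have hτ0 : (0:ℝ) < τ := lt_trans one_pos hτ
  -- abbreviations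
  set ζ : X → ℝ := fun x => if x ∈ A then 1 else β₀ with hζdef
  set T : ℕ → Set (Set X) := fun k =>
    {Q ∈ cubes k | Q ⊆ ball x₀ 1 ∧
      (∫ x in Q, ζ x ∂μ) < (1 + β₀) / 2 * (μ Q).toReal} with hTdef
  set R : ℕ → Set X := fun k => ⋃₀ T k with hRdef
  -- radii
  set rk : ℕ → ℝ := fun k => τ ^ (-(k : ℤ)) with hrk
  set Rk : ℕ → ℝ := fun k => τ ^ (-(k : ℤ) + 2) with hRk
  have rpos : ∀ k, 0 < rk k := fun k => zpow_pos hτ0 _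
  have Rpos : ∀ k, 0 < Rk k := fun k => zpow_pos hτ0 _
  have hRkeq : ∀ k, Rk k = τ ^ 2 * rk k := by
    intro k
    simp only [hRk, hrk]
    rw [zpow_add₀ (ne_of_gt hτ0)]
    norm_num
    exact mul_comm _ _
  have rlim0 : Tendsto rk atTop (nhds 0) := by
    have h1 : ∀ k : ℕ, rk k = (τ⁻¹) ^ k := by
      intro k
      show τ ^ (-(k:ℤ)) = τ⁻¹ ^ k
      rw [zpow_neg, ← inv_zpow, zpow_natCast]
    rw [show rk = fun k : ℕ => (τ⁻¹) ^ k from funext h1]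
    exact tendsto_pow_atTop_nhds_zero_of_lt_one (by positivity) (by
      rw [inv_lt_one_iff₀]; right; exact hτ)
  have Rlim0 : Tendsto Rk atTop (nhds 0) := by
    have h2 : Tendsto (fun k => τ ^ 2 * rk k) atTop (nhds (τ^2 * 0)) :=
      rlim0.const_mul _
    rw [mul_zero] at h2
    exact h2.congr (fun k => (hRkeq k).symm)
  have Rlim : Tendsto Rk atTop (𝓝[>] (0:ℝ)) :=
    tendsto_nhdsWithin_of_tendsto_nhds_of_eventually_within _ Rlim0
      (Eventually.of_forall fun k => Rpos k)
  have hTsub : ∀ k, T k ⊆ cubes k := fun k Q hQ => hQ.1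
  -- countability
  have hTc : ∀ k, (T k).Countable := by
    intro k
    apply Set.PairwiseDisjoint.countable_of_nonempty_interior
      (s := (id : Set X → Set X))
    · exact (hdisj k).subset (hTsub k)
    · intro Q hQ
      obtain ⟨z, hz1, _⟩ := hsand k Q (hTsub k hQ)
      exact ⟨z, interior_maximal hz1 isOpen_ball (mem_ball_self (rpos k))⟩
  have hRm : ∀ k, MeasurableSet (R k) := by
    intro k
    exact MeasurableSet.sUnion (hTc k) fun Q hQ => hmeas k Q (hTsub k hQ)
  have hRsub : ∀ k, R k ⊆ ball x₀ 1 := by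
    intro k x hx
    obtain ⟨Q, hQ, hxQ⟩ := hx
    exact hQ.2.1 hxQ
  have hballfin : μ (ball x₀ 1) ≠ ⊤ := (measure_ball_lt_top).ne
  -- scaling constant
  set K₀ : ℝ := 2 * τ ^ 2 with hK₀
  have hK₀pos : 0 < K₀ := by positivity
  set C : ℝ≥0 := IsUnifLocDoublingMeasure.scalingConstantOf μ K₀ with hC
  have hC1 : 1 ≤ C := IsUnifLocDoublingMeasure.one_le_scalingConstantOf μ K₀
  have hCpos : (0:ℝ≥0∞) < C := lt_of_lt_of_le one_pos (by exact_mod_cast hC1)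
  have hCne : (C : ℝ≥0∞) ≠ 0 := hCpos.ne'
  have hCnet : (C : ℝ≥0∞) ≠ ⊤ := ENNReal.coe_ne_top
  have hsc : ∀ᶠ k in atTop, rk k / 2 ≤ IsUnifLocDoublingMeasure.scalingScaleOf μ K₀ := by
    have h2 : Tendsto (fun k => rk k / 2) atTop (nhds 0) := by
      simpa using rlim0.div_const 2
    exact h2.eventually (ge_mem_nhds (IsUnifLocDoublingMeasure.scalingScaleOf_pos μ K₀))
  have compare : ∀ k, rk k / 2 ≤ IsUnifLocDoublingMeasure.scalingScaleOf μ K₀ →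
      ∀ (z : X) (Q : Set X), ball z (rk k) ⊆ Q →
      μ (closedBall z (Rk k)) ≤ C * μ Q := by
    intro k hk z Q hzQ
    have h1 : Rk k = K₀ * (rk k / 2) := by
      rw [hRkeq, hK₀]; ring
    calc μ (closedBall z (Rk k)) = μ (closedBall z (K₀ * (rk k / 2))) := by rw [h1]
      _ ≤ C * μ (closedBall z (rk k / 2)) :=
          IsUnifLocDoublingMeasure.measure_mul_le_scalingConstantOf_mul μ
            ⟨hK₀pos, le_rfl⟩ hk
      _ ≤ C * μ Q := by
          gcongr
          refine subset_trans (fun y hy => ?_) hzQ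
          rw [mem_closedBall] at hy
          rw [mem_ball]
          linarith [rpos k]
  -- integral computation
  have hint : ∀ (Q : Set X), MeasurableSet Q → μ Q ≠ ⊤ →
      (∫ x in Q, ζ x ∂μ) = (μ Q).toReal + (β₀ - 1) * (μ (Q \ A)).toReal := by
    intro Q hQm hQfin
    have hζ : ∀ x, ζ x = 1 + (β₀ - 1) * (Aᶜ).indicator (fun _ => (1:ℝ)) x := by
      intro x
      by_cases hx : x ∈ A <;> simp [hζdef, hx, indicator]
    have hi1 : IntegrableOn (fun _ => (1:ℝ)) Q μ :=
      integrableOn_const hQfin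
    have hi2 : IntegrableOn (fun x => (β₀ - 1) * (Aᶜ).indicator (fun _ => (1:ℝ)) x) Q μ := by
      apply Integrable.const_mul
      rw [integrable_indicator_iff hAm.compl]
      refine integrableOn_const (ne_of_lt (lt_of_le_of_lt ?_ hQfin.lt_top))
      exact le_trans (measure_mono (subset_univ _)) (le_of_eq (Measure.restrict_apply_univ _))
    calc (∫ x in Q, ζ x ∂μ)
        = ∫ x in Q, (1 + (β₀ - 1) * (Aᶜ).indicator (fun _ => (1:ℝ)) x) ∂μ := by
          exact setIntegral_congr_fun hQm (fun x _ => hζ x)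
      _ = (∫ _ in Q, (1:ℝ) ∂μ)
          + ∫ x in Q, (β₀ - 1) * (Aᶜ).indicator (fun _ => (1:ℝ)) x ∂μ :=
          integral_add hi1 hi2
      _ = (μ Q).toReal + (β₀ - 1) * (μ (Q \ A)).toReal := by
          rw [integral_const_mul, integral_indicator hAm.compl]
          rw [setIntegral_const, setIntegral_const, measureReal_restrict_apply hAm.compl]
          rw [show Aᶜ ∩ Q = Q \ A by rw [diff_eq, inter_comm]]
          simp [measureReal_def]
  -- every cube has finite measure
  have hQfin : ∀ k, ∀ Q ∈ cubes k, μ Q ≠ ⊤ := by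
    intro k Q hQ
    obtain ⟨z, _, hz2⟩ := hsand k Q hQ
    exact ((measure_mono hz2).trans_lt measure_ball_lt_top).ne
  -- membership criterion for T k
  have crit : ∀ k, ∀ Q ∈ cubes k, Q ⊆ ball x₀ 1 →
      (Q ∈ T k ↔ (μ (Q \ A)).toReal < (μ Q).toReal / 2) := by
    intro k Q hQc hQb
    have hfin := hQfin k Q hQc
    rw [hTdef]
    simp only [mem_setOf_eq]
    rw [hint Q (hmeas k Q hQc) hfin]
    constructor
    · rintro ⟨-, -, h⟩
      nlinarith [h]
    · intro h
      exact ⟨hQc, hQb, by nlinarith⟩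
  -- cubes in T k have positive measure
  have Tpos : ∀ k, ∀ Q ∈ T k, μ Q ≠ 0 := by
    intro k Q hQ
    intro h0
    have h := (crit k Q hQ.1 hQ.2.1).1 hQ
    have h1 : μ (Q \ A) = 0 := le_antisymm (h0 ▸ measure_mono diff_subset) (zero_le)
    rw [h0, h1] at h
    simp at h
  -- a.e. covering at all levels
  have hcov : ∀ᵐ x ∂μ, ∀ k, x ∈ ⋃₀ cubes k := by
    rw [ae_all_iff]
    intro k
    rw [ae_iff]
    have : {x | ¬ x ∈ ⋃₀ cubes k} = univ \ ⋃₀ cubes k := by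
      ext x; simp [mem_diff]
    rw [this]
    exact hcover k
  -- Lebesgue density
  have hden := (IsUnifLocDoublingMeasure.vitaliFamily μ 1).ae_tendsto_measure_inter_div_of_measurableSet hAm
  -- the key pointwise statement
  have key : ∀ᵐ x ∂μ, (x ∈ A → ∀ᶠ k in atTop, x ∈ R k) ∧
      (x ∉ A → ∀ᶠ k in atTop, x ∉ R k) := by
    filter_upwards [hden, hcov] with x hx hxcov
    choose Q hQc hxQ using hxcov
    choose z hz1 hz2 using fun k => hsand k (Q k) (hQc k)
    have hxmem : ∀ k, x ∈ closedBall (z k) (1 * Rk k) := by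
      intro k
      rw [one_mul]
      exact ball_subset_closedBall (hz2 k (hxQ k))
    have hlim := hx.comp (IsUnifLocDoublingMeasure.tendsto_closedBall_filterAt μ
      (K := 1) z Rk Rlim (Eventually.of_forall hxmem))
    have hqle : ∀ k, μ (Q k) ≤ μ (closedBall (z k) (Rk k)) := fun k =>
      measure_mono ((hz2 k).trans ball_subset_closedBall)
    have hmfin : ∀ k, μ (closedBall (z k) (Rk k)) ≠ ⊤ := fun k =>
      measure_closedBall_lt_top.ne
    -- the comparison, eventually
    have hcmp : ∀ᶠ k in atTop, μ (closedBall (z k) (Rk k)) ≤ C * μ (Q k) := by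
      filter_upwards [hsc] with k hk
      exact compare k hk (z k) (Q k) (hz1 k)
    constructor
    · -- x ∈ A : eventually the cube is selected
      intro hxA
      rw [indicator_of_mem hxA, Pi.one_apply] at hlim
      set ε : ℝ≥0∞ := (4 * C)⁻¹ with hεdef
      have h4Ct : (4:ℝ≥0∞) * C ≠ ⊤ := ENNReal.mul_ne_top (by norm_num) hCnet
      have hεne : ε ≠ 0 := ENNReal.inv_ne_zero.2 h4Ct
      have hεle : ε ≤ 1 := by
        rw [hεdef]
        apply ENNReal.inv_le_one.2
        calc (1:ℝ≥0∞) ≤ C := by exact_mod_cast hC1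
          _ ≤ 4 * C := by
              nth_rewrite 1 [← one_mul (C:ℝ≥0∞)]
              gcongr
              norm_num
      have h1ε : (1:ℝ≥0∞) - ε < 1 :=
        ENNReal.sub_lt_self ENNReal.one_ne_top one_ne_zero hεne
      have hev := hlim.eventually_const_lt h1ε
      -- Q k eventually inside the unit ball
      have hxball : dist x x₀ < 1 := hA hxA
      have hRsmall : ∀ᶠ k in atTop, Rk k < (1 - dist x x₀) / 2 := by
        apply Rlim0.eventually_lt_const
        linarith
      have hQball : ∀ᶠ k in atTop, Q k ⊆ ball x₀ 1 := by
        filter_upwards [hRsmall] with k hk y hy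
        have h1 := hz2 k hy
        have h2 := hz2 k (hxQ k)
        rw [mem_ball] at h1 h2 ⊢
        have := dist_triangle y (z k) x₀
        have := dist_triangle (z k) x x₀
        have := dist_comm (z k) x
        linarith [dist_triangle y (z k) x₀, dist_triangle (z k) x x₀,
          dist_comm (z k) x ▸ h2]
      filter_upwards [hev, hcmp, hQball] with k hk hkc hkb
      -- notation
      set m := μ (closedBall (z k) (Rk k)) with hm
      set mA := μ (A ∩ closedBall (z k) (Rk k)) with hmA
      have hratio : 1 - ε < mA / m := hk
      have hm0 : m ≠ 0 := by
        intro h0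
        have : mA = 0 := le_antisymm (h0 ▸ measure_mono inter_subset_right) (zero_le)
        rw [this, ENNReal.zero_div] at hratio
        exact absurd hratio (not_lt.2 (zero_le))
      have hmA_lb : (1 - ε) * m < mA :=
        (ENNReal.lt_div_iff_mul_lt (Or.inl hm0) (Or.inl (hmfin k))).1 hratio
      have hmA0 : mA ≠ 0 := by
        intro h0
        rw [h0] at hmA_lb
        exact (not_lt.2 (zero_le)) hmA_lb
      -- μ (Q k \ A) ≤ ε * m
      have hsplit : mA + μ (closedBall (z k) (Rk k) \ A) = m := by
        rw [hmA, inter_comm]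
        exact measure_inter_add_diff _ hAm
      have hdiff_le : μ (Q k \ A) ≤ ε * m := by
        have h1 : μ (Q k \ A) + (1 - ε) * m ≤ ε * m + (1 - ε) * m := by
          have hle1 : μ (Q k \ A) ≤ μ (closedBall (z k) (Rk k) \ A) :=
            measure_mono (diff_subset_diff_left ((hz2 k).trans ball_subset_closedBall))
          have h2 : μ (closedBall (z k) (Rk k) \ A) + mA = m := by
            rw [add_comm]; exact hsplit
          have h3 : ε * m + (1 - ε) * m = m := by
            rw [← add_mul, add_comm ε, tsub_add_cancel_of_le hεle, one_mul]
          rw [h3]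
          calc μ (Q k \ A) + (1 - ε) * m ≤ μ (closedBall (z k) (Rk k) \ A) + mA := by
                exact add_le_add hle1 hmA_lb.le
            _ = m := h2
        have hne : (1 - ε) * m ≠ ⊤ := ENNReal.mul_ne_top
          (tsub_le_self.trans_lt ENNReal.one_lt_top).ne (hmfin k)
        exact (ENNReal.add_le_add_iff_right hne).1 h1
      have hq0 : μ (Q k) ≠ 0 := by
        intro h0
        have : m ≤ 0 := by
          calc m ≤ C * μ (Q k) := hkc
            _ = 0 := by rw [h0, mul_zero]
        exact hm0 (le_antisymm this (zero_le))
      have hqfin := hQfin k (Q k) (hQc k)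
      have hfinal : μ (Q k \ A) ≤ 4⁻¹ * μ (Q k) := by
        calc μ (Q k \ A) ≤ ε * m := hdiff_le
          _ ≤ ε * (C * μ (Q k)) := by gcongr
          _ = 4⁻¹ * μ (Q k) := by
              rw [hεdef, ENNReal.mul_inv (Or.inl (by norm_num)) (Or.inl (by norm_num)),
                mul_assoc, ← mul_assoc (C:ℝ≥0∞)⁻¹, ENNReal.inv_mul_cancel hCne hCnet, one_mul]
      -- conclude Q k ∈ T k
      have hcrit := (crit k (Q k) (hQc k) hkb).2 (by
        have h1 : (μ (Q k \ A)).toReal ≤ 4⁻¹ * (μ (Q k)).toReal := by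
          have := ENNReal.toReal_mono (by
            exact ENNReal.mul_ne_top (by norm_num) hqfin) hfinal
          rwa [ENNReal.toReal_mul, show ((4:ℝ≥0∞)⁻¹).toReal = 4⁻¹ by
            rw [ENNReal.toReal_inv]; norm_num] at this
        have h2 : 0 < (μ (Q k)).toReal := ENNReal.toReal_pos hq0 hqfin
        linarith)
      exact ⟨Q k, hcrit, hxQ k⟩
    · -- x ∉ A : eventually no selected cube contains x
      intro hxA
      rw [indicator_of_notMem hxA] at hlim
      set ε : ℝ≥0∞ := (4 * C)⁻¹ with hεdef
      have hεne : ε ≠ 0 :=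
        ENNReal.inv_ne_zero.2 (ENNReal.mul_ne_top (by norm_num) hCnet)
      have hev := hlim.eventually_lt_const (by
        exact lt_of_le_of_ne (zero_le) (Ne.symm hεne) : (0:ℝ≥0∞) < ε)
      filter_upwards [hev, hcmp] with k hk hkc
      intro hxR
      obtain ⟨Q', hQ'T, hxQ'⟩ := hxR
      -- Q' must be the cube containing x
      have hQQ : Q' = Q k := by
        by_contra hne
        exact Set.disjoint_left.1 (hdisj k hQ'T.1 (hQc k) hne) hxQ' (hxQ k)
      subst hQQ
      set m := μ (closedBall (z k) (Rk k)) with hm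
      set mA := μ (A ∩ closedBall (z k) (Rk k)) with hmA
      have hq0 : μ (Q k) ≠ 0 := Tpos k (Q k) hQ'T
      have hqfin := hQfin k (Q k) (hQc k)
      have hm0 : m ≠ 0 := by
        intro h0
        exact hq0 (le_antisymm (h0 ▸ hqle k) (zero_le))
      have hmA_ub : mA < ε * m :=
        (ENNReal.div_lt_iff (Or.inl hm0) (Or.inl (hmfin k))).1 hk
      have hQA_le : μ (Q k ∩ A) ≤ 4⁻¹ * μ (Q k) := by
        calc μ (Q k ∩ A) ≤ mA := by
              rw [hmA]
              exact measure_mono (fun y hy => ⟨hy.2, ((hz2 k).trans ball_subset_closedBall) hy.1⟩)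
          _ ≤ ε * m := hmA_ub.le
          _ ≤ ε * (C * μ (Q k)) := by gcongr
          _ = 4⁻¹ * μ (Q k) := by
              rw [hεdef, ENNReal.mul_inv (Or.inl (by norm_num)) (Or.inl (by norm_num)),
                mul_assoc, ← mul_assoc (C:ℝ≥0∞)⁻¹, ENNReal.inv_mul_cancel hCne hCnet, one_mul]
      have hcrit := (crit k (Q k) (hQc k) hQ'T.2.1).1 hQ'T
      -- measure split of Q k
      have hsplitQ : μ (Q k ∩ A) + μ (Q k \ A) = μ (Q k) :=
        measure_inter_add_diff _ hAm
      have hQA_fin : μ (Q k ∩ A) ≠ ⊤ :=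
        ((measure_mono inter_subset_left).trans_lt hqfin.lt_top).ne
      have hQD_fin : μ (Q k \ A) ≠ ⊤ :=
        ((measure_mono diff_subset).trans_lt hqfin.lt_top).ne
      have htr : (μ (Q k ∩ A)).toReal + (μ (Q k \ A)).toReal = (μ (Q k)).toReal := by
        rw [← ENNReal.toReal_add hQA_fin hQD_fin, hsplitQ]
      have h1 : (μ (Q k ∩ A)).toReal ≤ 4⁻¹ * (μ (Q k)).toReal := by
        have := ENNReal.toReal_mono (ENNReal.mul_ne_top (by norm_num) hqfin) hQA_le
        rwa [ENNReal.toReal_mul, show ((4:ℝ≥0∞)⁻¹).toReal = 4⁻¹ by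
          rw [ENNReal.toReal_inv]; norm_num] at this
      have h2 : 0 < (μ (Q k)).toReal := ENNReal.toReal_pos hq0 hqfin
      linarith
  -- dominated convergence lemma
  have main : ∀ (E : ℕ → Set X), (∀ k, MeasurableSet (E k)) → (∀ k, E k ⊆ ball x₀ 1) →
      (∀ᵐ x ∂μ, ∀ᶠ k in atTop, x ∉ E k) → Tendsto (fun k => μ (E k)) atTop (nhds 0) := by
    intro E hEm hEb hEae
    have heq : ∀ k, μ (E k) = ∫⁻ x, (E k).indicator (fun _ => (1:ℝ≥0∞)) x ∂μ := fun k =>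
      (lintegral_indicator_one (hEm k)).symm
    simp_rw [heq]
    rw [show (nhds (0:ℝ≥0∞)) = nhds (∫⁻ _, (0:ℝ≥0∞) ∂μ) by rw [lintegral_zero]]
    apply tendsto_lintegral_of_dominated_convergence
      ((ball x₀ 1).indicator (fun _ => (1:ℝ≥0∞)))
    · intro n
      exact (measurable_const.indicator (hEm n))
    · intro n
      refine Eventually.of_forall fun x => ?_
      exact indicator_le_indicator_of_subset (hEb n) (fun _ => zero_le) x
    · have h5 : ∫⁻ a, (ball x₀ 1).indicator (fun _ => (1:ℝ≥0∞)) a ∂μ = μ (ball x₀ 1) :=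
        lintegral_indicator_one measurableSet_ball
      rw [h5]
      exact hballfin
    · filter_upwards [hEae] with x hx
      apply Tendsto.congr' _ tendsto_const_nhds
      filter_upwards [hx] with k hk
      simp [indicator_of_notMem hk]
  -- the two main convergences
  have hE1 : Tendsto (fun k => μ (A \ R k)) atTop (nhds 0) := by
    apply main
    · intro k; exact hAm.diff (hRm k)
    · intro k; exact diff_subset.trans hA
    · filter_upwards [key] with x hx
      by_cases hxA : x ∈ A
      · filter_upwards [hx.1 hxA] with k hk
        exact fun h => h.2 hk
      · exact Eventually.of_forall fun k h => hxA h.1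
  have hE2 : Tendsto (fun k => μ (R k \ A)) atTop (nhds 0) := by
    apply main
    · intro k; exact (hRm k).diff hAm
    · intro k; exact diff_subset.trans (hRsub k)
    · filter_upwards [key] with x hx
      by_cases hxA : x ∈ A
      · exact Eventually.of_forall fun k h => h.2 hxA
      · filter_upwards [hx.2 hxA] with k hk
        exact fun h => hk h.1
  -- boundary strips
  have hS : ∀ k : ℕ, 2 ≤ k → μ (thickening ((k:ℝ)⁻¹ * rk k) (R k) \ R k)
      ≤ ENNReal.ofReal (C₁ * ((k:ℝ)⁻¹) ^ η) * μ (ball x₀ 1) := by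
    intro k hk
    have hk0 : (0:ℝ) < (k:ℝ) := Nat.cast_pos.2 (by omega)
    have ht : (k:ℝ)⁻¹ ∈ Ioo (0:ℝ) 1 := ⟨by positivity, by
      rw [inv_lt_one_iff₀]
      right
      exact_mod_cast (by omega : 1 < k)⟩
    have hsub : thickening ((k:ℝ)⁻¹ * rk k) (R k) \ R k ⊆
        ⋃ Q ∈ T k, {x | x ∉ Q ∧ infDist x Q ≤ (k:ℝ)⁻¹ * rk k} := by
      rintro x ⟨hx1, hx2⟩
      rw [mem_thickening_iff] at hx1
      obtain ⟨y, hyR, hxy⟩ := hx1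
      obtain ⟨Qs, hQT, hyQ⟩ := hyR
      refine mem_biUnion hQT ⟨fun hxQ => hx2 ⟨Qs, hQT, hxQ⟩, ?_⟩
      exact le_trans (infDist_le_dist_of_mem hyQ) hxy.le
    have htot : ∑' Q : T k, μ (Q:Set X) ≤ μ (ball x₀ 1) := by
      have heq := measure_biUnion (μ := μ) (f := fun Q : Set X => Q) (hTc k)
        ((hdisj k).subset (hTsub k)) (fun Q hQ => hmeas k Q (hTsub k hQ))
      rw [← heq]
      apply measure_mono
      intro x hx
      obtain ⟨Q, hQ, hxQ⟩ := mem_iUnion₂.1 hx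
      exact hRsub k ⟨Q, hQ, hxQ⟩
    calc μ (thickening ((k:ℝ)⁻¹ * rk k) (R k) \ R k)
        ≤ μ (⋃ Q ∈ T k, {x | x ∉ Q ∧ infDist x Q ≤ (k:ℝ)⁻¹ * rk k}) := measure_mono hsub
      _ ≤ ∑' Q : T k, μ {x | x ∉ (Q:Set X) ∧ infDist x (Q:Set X) ≤ (k:ℝ)⁻¹ * rk k} :=
          measure_biUnion_le μ (hTc k) _
      _ ≤ ∑' Q : T k, ENNReal.ofReal (C₁ * ((k:ℝ)⁻¹) ^ η) * μ (Q:Set X) :=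
          ENNReal.tsum_le_tsum (fun Q => hsmall k Q (hTsub k Q.2) ((k:ℝ)⁻¹) ht)
      _ = ENNReal.ofReal (C₁ * ((k:ℝ)⁻¹) ^ η) * ∑' Q : T k, μ (Q:Set X) :=
          ENNReal.tsum_mul_left
      _ ≤ ENNReal.ofReal (C₁ * ((k:ℝ)⁻¹) ^ η) * μ (ball x₀ 1) := by
          gcongr
  -- the bound tends to zero
  have hbound : Tendsto (fun k : ℕ => ENNReal.ofReal (C₁ * ((k:ℝ)⁻¹) ^ η) * μ (ball x₀ 1))
      atTop (nhds 0) := by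
    have h1 : Tendsto (fun k : ℕ => ((k:ℝ)⁻¹) ^ η) atTop (nhds 0) := by
      have h2 : Tendsto (fun x : ℝ => x ^ (-η)) atTop (nhds 0) := tendsto_rpow_neg_atTop hη
      have h3 := h2.comp (tendsto_natCast_atTop_atTop (R := ℝ))
      apply h3.congr
      intro k
      simp only [Function.comp_apply]
      rw [Real.rpow_neg (Nat.cast_nonneg k), ← Real.inv_rpow (Nat.cast_nonneg k)]
    have h4 : Tendsto (fun k : ℕ => C₁ * ((k:ℝ)⁻¹) ^ η) atTop (nhds 0) := by
      simpa using h1.const_mul C₁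
    have h5 := ENNReal.Tendsto.mul_const (ENNReal.tendsto_ofReal h4)
      (Or.inr hballfin)
    simpa using h5
  -- inclusion of the symmetric difference
  have hincl : ∀ k : ℕ, symmDiff (Ak k) A ⊆
      (A \ R k) ∪ (R k \ A) ∪ (thickening ((k:ℝ)⁻¹ * rk k) (R k) \ R k) := by
    intro k x hx
    rcases Set.mem_symmDiff.1 hx with ⟨hx1, hx2⟩ | ⟨hx1, hx2⟩
    · rcases hAkR k hx1 with hR | hTh
      · exact Or.inl (Or.inr ⟨hR, hx2⟩)
      · by_cases hR : x ∈ R k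
        · exact Or.inl (Or.inr ⟨hR, hx2⟩)
        · exact Or.inr ⟨hTh, hR⟩
    · exact Or.inl (Or.inl ⟨hx1, fun h => hx2 (hRAk k h)⟩)
  have hle : ∀ᶠ k in atTop, μ (symmDiff (Ak k) A) ≤
      μ (A \ R k) + μ (R k \ A)
        + ENNReal.ofReal (C₁ * ((k:ℝ)⁻¹) ^ η) * μ (ball x₀ 1) := by
    filter_upwards [eventually_ge_atTop 2] with k hk
    calc μ (symmDiff (Ak k) A)
        ≤ μ ((A \ R k) ∪ (R k \ A) ∪ (thickening ((k:ℝ)⁻¹ * rk k) (R k) \ R k)) :=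
          measure_mono (hincl k)
      _ ≤ μ (A \ R k) + μ (R k \ A) + μ (thickening ((k:ℝ)⁻¹ * rk k) (R k) \ R k) :=
          le_trans (measure_union_le _ _) (by gcongr; exact measure_union_le _ _)
      _ ≤ μ (A \ R k) + μ (R k \ A)
            + ENNReal.ofReal (C₁ * ((k:ℝ)⁻¹) ^ η) * μ (ball x₀ 1) := by
          gcongr
          exact hS k hk
  have hsum : Tendsto (fun k : ℕ => μ (A \ R k) + μ (R k \ A)
      + ENNReal.ofReal (C₁ * ((k:ℝ)⁻¹) ^ η) * μ (ball x₀ 1)) atTop (nhds 0) := by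
    have := (hE1.add hE2).add hbound
    simpa using this
  exact tendsto_of_tendsto_of_tendsto_of_le_of_le' tendsto_const_nhds hsum
    (Eventually.of_forall fun k => zero_le) hle
end

section
/- Let G be a Carnot group with the semi-metric d(g,h) = ‖g⁻¹h‖ from a p-convex homogeneous norm: there are p, C ≥ 1 such that for all u, v, w ∈ G, (d(u,v)^p + d(v,w)^p)/2 ≥ (d(u,w)/2)^p + C·NH(u⁻¹w)^p. Suppose f : G ⊇ U → G satisfies d(f(0), f(e^x)) ≥ A·d(0, e^x) with d(0,e^x) = 1 and d(0, e^{x/2}) = d(e^{x/2}, e^x) = 1/2 for a horizontal x, and suppose NH(f(0)⁻¹f(e^x)) ≥ τ·‖f(0)⁻¹f(e^x)‖ for some τ ∈ (0,1). Then at least one of the pairs (0, e^{x/2}) or (e^{x/2}, e^x) is (1 + k)A-stretched by f, where k = 2^{p−1}·C·p⁻¹·τ^p, provided τ is small enough that (1 + 2^p C τ^p)^{1/p} ≥ 1 + 2^{p−1}Cp⁻¹τ^p. -/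
/-- the non-horizontal endpoint case.  With the `p`-convex homogeneous
semi-metric `d(g,h) = Nm(g⁻¹h)` on a Carnot group, if the endpoints `1, g₂` of a
horizontal segment with midpoint `g₁` are `A`-stretched by `f` and the image
increment `f(1)⁻¹ f(g₂)` is `τ`-non-horizontal, then one of the half pairs
`(1, g₁)`, `(g₁, g₂)` is `(1+k)A`-stretched, `k = 2^{p−1} C p⁻¹ τ^p`. -/
theorem stmt17 {G : Type*} [Group G]
    (Nm NH : G → ℝ) (d : G → G → ℝ)
    (hd : ∀ g h, d g h = Nm (g⁻¹ * h))
    (hdnn : ∀ g h, 0 ≤ d g h) (hNHnn : ∀ g, 0 ≤ NH g)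
    (p C : ℝ) (hp : 1 ≤ p) (hC : 1 ≤ C)
    (hconv : ∀ u v w : G,
      (d u w / 2) ^ p + C * NH (u⁻¹ * w) ^ p ≤ (d u v ^ p + d v w ^ p) / 2)
    (g₁ g₂ : G) (h01 : d 1 g₁ = 1 / 2) (h02 : d 1 g₂ = 1) (h12 : d g₁ g₂ = 1 / 2)
    (f : G → G) (A : ℝ) (hA : 0 < A)
    (hstretch : A * d 1 g₂ ≤ d (f 1) (f g₂))
    (τ : ℝ) (hτ : 0 < τ) (hτ1 : τ < 1)
    (hNH : τ * Nm ((f 1)⁻¹ * f g₂) ≤ NH ((f 1)⁻¹ * f g₂))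
    (htaylor : 1 + 2 ^ (p - 1) * C * p⁻¹ * τ ^ p ≤ (1 + 2 ^ p * C * τ ^ p) ^ p⁻¹) :
    (1 + 2 ^ (p - 1) * C * p⁻¹ * τ ^ p) * A * d 1 g₁ ≤ d (f 1) (f g₁) ∨
    (1 + 2 ^ (p - 1) * C * p⁻¹ * τ ^ p) * A * d g₁ g₂ ≤ d (f g₁) (f g₂) := by
  have hp0 : (0:ℝ) < p := lt_of_lt_of_le one_pos hp
  set a := d (f 1) (f g₁) with ha
  set b := d (f g₁) (f g₂) with hb
  set D := d (f 1) (f g₂) with hD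
  set N := NH ((f 1)⁻¹ * f g₂) with hN
  have hAD : A ≤ D := by simpa [h02] using hstretch
  have hDnn : 0 ≤ D := hdnn _ _
  have hann : 0 ≤ a := hdnn _ _
  have hbnn : 0 ≤ b := hdnn _ _
  have hτD : τ * D ≤ N := by rw [hD, hd]; exact hNH
  have hkey := hconv (f 1) (f g₁) (f g₂)
  -- lower bounds
  have hC0 : (0:ℝ) ≤ C := le_trans zero_le_one hC
  have hNp : (τ * A) ^ p ≤ N ^ p := by
    apply Real.rpow_le_rpow (by positivity) _ hp0.le
    calc τ * A ≤ τ * D := by nlinarith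
      _ ≤ N := hτD
  have hDp : (A / 2) ^ p ≤ (D / 2) ^ p :=
    Real.rpow_le_rpow (by positivity) (by linarith) hp0.le
  have hmain : (A / 2) ^ p * (1 + 2 ^ p * C * τ ^ p) ≤ (a ^ p + b ^ p) / 2 := by
    have e1 : (τ * A) ^ p = τ ^ p * A ^ p := Real.mul_rpow hτ.le hA.le
    have e2 : (A / 2) ^ p = A ^ p / 2 ^ p := Real.div_rpow hA.le (by norm_num : (0:ℝ) ≤ 2) p
    have e3 : (0:ℝ) < (2:ℝ) ^ p := Real.rpow_pos_of_pos two_pos p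
    have : (A / 2) ^ p * (1 + 2 ^ p * C * τ ^ p) = (A / 2) ^ p + C * (τ * A) ^ p := by
      rw [e1, e2]; field_simp
    rw [this]
    calc (A / 2) ^ p + C * (τ * A) ^ p ≤ (D / 2) ^ p + C * N ^ p := by
          have := mul_le_mul_of_nonneg_left hNp hC0
          linarith
      _ ≤ (a ^ p + b ^ p) / 2 := hkey
  -- max
  set M := max a b with hM
  have hMnn : 0 ≤ M := le_trans hann (le_max_left _ _)
  have havg : (a ^ p + b ^ p) / 2 ≤ M ^ p := by
    have ha' : a ^ p ≤ M ^ p := Real.rpow_le_rpow hann (le_max_left _ _) hp0.le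
    have hb' : b ^ p ≤ M ^ p := Real.rpow_le_rpow hbnn (le_max_right _ _) hp0.le
    linarith
  set X := (1:ℝ) + 2 ^ p * C * τ ^ p with hX
  have hX0 : (0:ℝ) ≤ X := by positivity
  set L := A / 2 * X ^ p⁻¹ with hL
  have hLnn : 0 ≤ L := by positivity
  have hLpM : L ^ p ≤ M ^ p := by
    have : L ^ p = (A / 2) ^ p * X := by
      rw [hL, Real.mul_rpow (by positivity) (by positivity),
        ← Real.rpow_mul hX0, inv_mul_cancel₀ hp0.ne', Real.rpow_one]
    rw [this]
    exact le_trans hmain havg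
  have hLM : L ≤ M := by
    by_contra h
    push_neg at h
    exact absurd hLpM (not_le.mpr (Real.rpow_lt_rpow hMnn h hp0))
  have hfinal : (1 + 2 ^ (p - 1) * C * p⁻¹ * τ ^ p) * A * (1 / 2) ≤ M := by
    calc (1 + 2 ^ (p - 1) * C * p⁻¹ * τ ^ p) * A * (1 / 2)
        ≤ X ^ p⁻¹ * A * (1 / 2) := by nlinarith
      _ = L := by rw [hL]; ring
      _ ≤ M := hLM
  rcases le_max_iff.mp (le_refl M) with h | h
  · left; rw [h01]; exact le_trans hfinal h
  · right; rw [h12]; exact le_trans hfinal h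
end

section
/- Let Y₁, Y₂ be separated nets in a rational nilpotent Lie group G of topological dimension n with nilpotent dyadic tiles, and suppose the dyadic tile efficient-counting theorem holds: there is C₀ > 0 such that every finite union A of unit tiles is describable by a collection 𝒟 of dyadic tiles (via disjoint unions and proper differences, each tile used once) with #{D ∈ 𝒟 : level(D) = k} ≤ C₀·p(A)/2^{k(n−1)}. If there exist ε > 0 and C > 0 such that for every dyadic tile T of level k, |#(T ∩ Y₁) − #(T ∩ Y₂)| ≤ C·2^{k(n−1−ε)}, then there exists C' > 0 such that for every finite union A of unit tiles, |#(A ∩ Y₁) − #(A ∩ Y₂)| ≤ C'·p(A); hence the total discrepancy on unions of tiles is linearly bounded by coarse perimeter. -/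
open MeasureTheory Metric Set Classical

/-- summing per-tile discrepancy bounds over an efficient dyadic
description.  If every finite union `A` of unit tiles is describable by a
collection `𝒟` of dyadic tiles with at most `C₀ p(A)/2^{k(n−1)}` tiles of level
`k` (so that the discrepancy on `A` is bounded by the sum of the discrepancies
on the tiles of `𝒟`), and each dyadic tile of level `k` has discrepancy at most
`C·2^{k(n−1−ε)}`, then the discrepancy on every finite union of unit tiles is
linearly bounded by its coarse perimeter. -/
theorem stmt19 {X : Type*} [MetricSpace X] [MeasurableSpace X]
    (μ : Measure X) (n : ℕ) (hn : 2 ≤ n)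
    (Y₁ Y₂ : Set X)
    (Units Tiles : Set (Set X)) (lvl : Set X → ℕ)
    (c : ℝ) (hc : 0 < c)
    (hperim : ∀ A : Set X, (∃ F : Finset (Set X), ↑F ⊆ Units ∧ A = ⋃₀ (F : Set (Set X))) →
      A.Nonempty → c ≤ (μ (thickening 1 (frontier A))).toReal)
    (C₀ : ℝ) (hC₀ : 0 < C₀)
    (hdesc : ∀ A : Set X, (∃ F : Finset (Set X), ↑F ⊆ Units ∧ A = ⋃₀ (F : Set (Set X))) →
      ∃ 𝒟 : Finset (Set X), ↑𝒟 ⊆ Tiles ∧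
        |((Y₁ ∩ A).ncard : ℝ) - ((Y₂ ∩ A).ncard : ℝ)|
          ≤ ∑ T ∈ 𝒟, |((Y₁ ∩ T).ncard : ℝ) - ((Y₂ ∩ T).ncard : ℝ)| ∧
        ∀ k : ℕ, ((𝒟.filter fun T => lvl T = k).card : ℝ)
          ≤ C₀ * (μ (thickening 1 (frontier A))).toReal / 2 ^ (k * (n - 1)))
    (ε C : ℝ) (hε : 0 < ε) (hC : 0 < C)
    (htile : ∀ T ∈ Tiles,
      |((Y₁ ∩ T).ncard : ℝ) - ((Y₂ ∩ T).ncard : ℝ)|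
        ≤ C * (2 : ℝ) ^ ((lvl T : ℝ) * ((n : ℝ) - 1 - ε))) :
    ∃ C' > 0, ∀ A : Set X, (∃ F : Finset (Set X), ↑F ⊆ Units ∧ A = ⋃₀ (F : Set (Set X))) →
      |((Y₁ ∩ A).ncard : ℝ) - ((Y₂ ∩ A).ncard : ℝ)|
        ≤ C' * (μ (thickening 1 (frontier A))).toReal := by
 
  set r : ℝ := (2 : ℝ) ^ (-ε) with hrdef
  have hr0 : 0 < r := Real.rpow_pos_of_pos two_pos _
  have hr1 : r < 1 := Real.rpow_lt_one_of_one_lt_of_neg one_lt_two (neg_neg_of_pos hε)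
  have h1r : 0 < 1 - r := by linarith
  refine ⟨C₀ * C / (1 - r), by positivity, ?_⟩
  intro A hA
  rcases A.eq_empty_or_nonempty with rfl | hAne
  · simp only [Set.inter_empty, Set.ncard_empty, Nat.cast_zero, sub_zero, abs_zero]
    have : (0:ℝ) ≤ (μ (thickening 1 (frontier (∅ : Set X)))).toReal := ENNReal.toReal_nonneg
    positivity
  obtain ⟨𝒟, h𝒟T, hle, hcard⟩ := hdesc A hA
  set p := (μ (thickening 1 (frontier A))).toReal with hpdef
  have hp : 0 < p := lt_of_lt_of_le hc (hperim A hA hAne)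
  have key : ∀ k ∈ 𝒟.image lvl,
      ∑ T ∈ 𝒟.filter (fun T => lvl T = k), |((Y₁ ∩ T).ncard : ℝ) - ((Y₂ ∩ T).ncard : ℝ)|
        ≤ (C₀ * C * p) * r ^ k := by
    intro k _
    have hb : (0:ℝ) ≤ C * (2 : ℝ) ^ ((k : ℝ) * ((n : ℝ) - 1 - ε)) := by positivity
    have step1 : ∑ T ∈ 𝒟.filter (fun T => lvl T = k),
        |((Y₁ ∩ T).ncard : ℝ) - ((Y₂ ∩ T).ncard : ℝ)|
        ≤ ((𝒟.filter (fun T => lvl T = k)).card : ℝ)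
            * (C * (2 : ℝ) ^ ((k : ℝ) * ((n : ℝ) - 1 - ε))) := by
      rw [← nsmul_eq_mul]
      apply Finset.sum_le_card_nsmul
      intro T hT
      rw [Finset.mem_filter] at hT
      have := htile T (h𝒟T hT.1)
      rwa [hT.2] at this
    have step2 : ((𝒟.filter (fun T => lvl T = k)).card : ℝ)
            * (C * (2 : ℝ) ^ ((k : ℝ) * ((n : ℝ) - 1 - ε)))
        ≤ (C₀ * p / 2 ^ (k * (n - 1)))
            * (C * (2 : ℝ) ^ ((k : ℝ) * ((n : ℝ) - 1 - ε))) :=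
      mul_le_mul_of_nonneg_right (hcard k) hb
    have hcast : ((k * (n - 1) : ℕ) : ℝ) = (k : ℝ) * ((n : ℝ) - 1) := by
      push_cast [Nat.cast_sub (by omega : 1 ≤ n)]
      ring
    have hsplit : (2 : ℝ) ^ ((k : ℝ) * ((n : ℝ) - 1 - ε))
        = (2 : ℝ) ^ (k * (n - 1)) * r ^ k := by
      have h2 : ((2:ℝ) ^ (k * (n - 1)) : ℝ) = (2:ℝ) ^ (((k * (n-1) : ℕ)) : ℝ) := by
        rw [Real.rpow_natCast]
      have h3 : r ^ k = (2:ℝ) ^ ((k : ℝ) * (-ε)) := by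
        rw [hrdef, ← Real.rpow_natCast ((2:ℝ) ^ (-ε)) k, ← Real.rpow_mul (by norm_num)]
        ring_nf
      rw [h2, h3, hcast, ← Real.rpow_add two_pos]
      ring_nf
    have hpow : (0:ℝ) < (2:ℝ) ^ (k * (n-1)) := by positivity
    calc ∑ T ∈ 𝒟.filter (fun T => lvl T = k),
        |((Y₁ ∩ T).ncard : ℝ) - ((Y₂ ∩ T).ncard : ℝ)|
        ≤ (C₀ * p / 2 ^ (k * (n - 1)))
            * (C * (2 : ℝ) ^ ((k : ℝ) * ((n : ℝ) - 1 - ε))) := le_trans step1 step2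
      _ = (C₀ * C * p) * r ^ k := by
          rw [hsplit]; field_simp
  have hsummable : Summable (fun k : ℕ => r ^ k) := summable_geometric_of_lt_one hr0.le hr1
  calc |((Y₁ ∩ A).ncard : ℝ) - ((Y₂ ∩ A).ncard : ℝ)|
      ≤ ∑ T ∈ 𝒟, |((Y₁ ∩ T).ncard : ℝ) - ((Y₂ ∩ T).ncard : ℝ)| := hle
    _ = ∑ k ∈ 𝒟.image lvl, ∑ T ∈ 𝒟.filter (fun T => lvl T = k),
          |((Y₁ ∩ T).ncard : ℝ) - ((Y₂ ∩ T).ncard : ℝ)| := by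
        rw [Finset.sum_fiberwise_of_maps_to (fun T hT => Finset.mem_image_of_mem lvl hT)]
    _ ≤ ∑ k ∈ 𝒟.image lvl, (C₀ * C * p) * r ^ k := Finset.sum_le_sum key
    _ = (C₀ * C * p) * ∑ k ∈ 𝒟.image lvl, r ^ k := by rw [Finset.mul_sum]
    _ ≤ (C₀ * C * p) * ∑' k : ℕ, r ^ k := by
        exact mul_le_mul_of_nonneg_left
          (Summable.sum_le_tsum _ (fun k _ => by positivity) hsummable) (by positivity)
    _ = (C₀ * C * p) * (1 - r)⁻¹ := by
        congr 1
        exact tsum_geometric_of_lt_one hr0.le hr1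
    _ = C₀ * C / (1 - r) * p := by field_simp
end
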